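/- arXiv:math/9805128 — 5 statements merged into one kernel-verified Lean document; each statement's English description precedes it below -/
import Mathlib

section
/- For n ≥ 2 and a simple matroid M_0 with a fixed non-loop element ε_0, the Tutte polynomial of the parallel connection P(C_n, M_0) along ε_0 satisfies T_{P(C_n,M_0)}(x,y) = (Σ_{i=0}^{n-2} x^i) · T_{M_0}(x,y) + y · T_{M_0/ε_0}(x,y). -/
open MvPolynomial Classical
open scoped Matroid

variable {α β : Type*}

/-- The rank of a set in a matroid: the largest cardinality of an independent subset. -/
noncomputable def Matroid.mrank (M : Matroid α) (X : Set α) : ℕ :=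
  sSup {n | ∃ I, M.Indep I ∧ I ⊆ X ∧ I.ncard = n}

/-- The Tutte polynomial (corank–nullity sum) of a matroid on a finite type,
as a polynomial in two variables `X 0` and `X 1`. -/
noncomputable def Matroid.tutte [Fintype α] (M : Matroid α) : MvPolynomial (Fin 2) ℤ :=
  ∑ A ∈ Finset.univ.filter (fun A : Finset α => (A : Set α) ⊆ M.E),
    (X 0 - 1) ^ (M.mrank M.E - M.mrank (A : Set α)) *
      (X 1 - 1) ^ (A.card - M.mrank (A : Set α))

/-- A circuit: a minimal dependent subset of the ground set. -/
def Matroid.IsCircuit' (M : Matroid α) (C : Set α) : Prop :=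
  C ⊆ M.E ∧ ¬ M.Indep C ∧ ∀ D ⊂ C, M.Indep D

/-- Deletion of a set of elements. -/
def Matroid.del (M : Matroid α) (D : Set α) : Matroid α := M ↾ (M.E \ D)

/-- Contraction of a set of elements, via the dual. -/
def Matroid.con (M : Matroid α) (C : Set α) : Matroid α := (M✶ ↾ (M✶.E \ C))✶

/-- A coloop (isthmus): an element of every base. -/
def Matroid.IsColoop' (M : Matroid α) (e : α) : Prop := ∀ B, M.IsBase B → e ∈ B

/-- A simple matroid: every set of at most two elements of the ground set is independent. -/
def Matroid.IsSimple (M : Matroid α) : Prop := ∀ X ⊆ M.E, X.ncard ≤ 2 → M.Indep X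

/-- A connected matroid: any two distinct elements lie on a common circuit. -/
def Matroid.IsConnected (M : Matroid α) : Prop :=
  M.E.Nonempty ∧ ∀ e ∈ M.E, ∀ f ∈ M.E, e = f ∨ ∃ C, M.IsCircuit' C ∧ e ∈ C ∧ f ∈ C

set_option linter.unusedVariables false
set_option linter.unusedSectionVars false
set_option maxHeartbeats 1000000


section AuxBinom
open Finset
lemma aux_binom {R : Type*} [CommRing R] (t : R) :
    ∀ m : ℕ, ∑ j ∈ range m, (m.choose j : R) * t ^ (m - 1 - j) =
      ∑ i ∈ range m, (t + 1) ^ i := by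
  intro m
  induction m with
  | zero => simp
  | succ m ih =>
    have hpow : (t + 1) ^ m = ∑ k ∈ range (m + 1), (m.choose k : R) * t ^ (m - k) := by
      rw [add_comm t 1, add_pow]
      exact Finset.sum_congr rfl fun k _ => by rw [one_pow]; ring
    rw [Finset.sum_range_succ' (fun j => ((m+1).choose j : R) * t ^ (m + 1 - 1 - j)) m]
    have hsplit : ∑ j ∈ range m, ((m+1).choose (j+1) : R) * t ^ (m + 1 - 1 - (j+1)) =
        ∑ j ∈ range m, ((m.choose j : R) * t ^ (m - 1 - j) +
          (m.choose (j+1) : R) * t ^ (m - 1 - j)) := by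
      refine Finset.sum_congr rfl fun j hj => ?_
      rw [Nat.choose_succ_succ m j, Nat.cast_add, add_mul,
        show m + 1 - 1 - (j+1) = m - 1 - j from by omega]
    rw [hsplit, Finset.sum_add_distrib, ih]
    have h2 : ∑ j ∈ range m, (m.choose (j+1) : R) * t ^ (m - 1 - j) +
        ((m+1).choose 0 : R) * t ^ (m + 1 - 1 - 0) = (t + 1) ^ m := by
      have hconv : ∑ j ∈ range m, (m.choose (j+1) : R) * t ^ (m - 1 - j) =
          ∑ j ∈ range m, (m.choose (j+1) : R) * t ^ (m - (j+1)) :=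
        Finset.sum_congr rfl fun j _ => by
          rw [show m - 1 - j = m - (j+1) from by omega]
      rw [hconv, hpow, Finset.sum_range_succ' (fun k => (m.choose k : R) * t ^ (m - k)) m]
      simp
    rw [add_assoc, h2, Finset.sum_range_succ]

lemma aux_powerset_sum {R : Type*} [CommRing R] {α : Type*} [DecidableEq α]
    (t : R) (s : Finset α) :
    ∑ S ∈ s.powerset.erase s, t ^ (s.card - 1 - S.card) =
      ∑ i ∈ range s.card, (t + 1) ^ i := by
  have htot : ∑ S ∈ s.powerset, t ^ (s.card - 1 - S.card) =
      ∑ j ∈ range (s.card + 1), (s.card.choose j : R) * t ^ (s.card - 1 - j) := by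
    calc ∑ S ∈ s.powerset, t ^ (s.card - 1 - S.card)
        = ∑ j ∈ range (s.card + 1), s.card.choose j • t ^ (s.card - 1 - j) :=
          Finset.sum_powerset_apply_card (f := fun j => t ^ (s.card - 1 - j)) (x := s)
      _ = ∑ j ∈ range (s.card + 1), (s.card.choose j : R) * t ^ (s.card - 1 - j) :=
          Finset.sum_congr rfl fun j _ => nsmul_eq_mul _ _
  have herase : ∑ S ∈ s.powerset.erase s, t ^ (s.card - 1 - S.card) +
        t ^ (s.card - 1 - s.card) = ∑ S ∈ s.powerset, t ^ (s.card - 1 - S.card) :=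
    Finset.sum_erase_add _ _ (Finset.mem_powerset_self s)
  rw [htot, Finset.sum_range_succ] at herase
  simp only [show s.card - 1 - s.card = 0 from by omega, pow_zero, Nat.choose_self,
    Nat.cast_one, one_mul] at herase
  have := add_right_cancel herase
  rw [this, aux_binom]

lemma aux_sum_powerset_union {α R : Type*} [DecidableEq α] [AddCommMonoid R]
    {s t : Finset α} (hdisj : Disjoint s t) (f : Finset α → R) :
    ∑ A ∈ (s ∪ t).powerset, f A = ∑ S ∈ s.powerset, ∑ B ∈ t.powerset, f (S ∪ B) := by
  refine Eq.trans ?_ (Finset.sum_product (s := s.powerset) (t := t.powerset)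
    (f := fun p => f (p.1 ∪ p.2)))
  refine Finset.sum_nbij' (fun A => (A ∩ s, A ∩ t)) (fun p => p.1 ∪ p.2) ?_ ?_ ?_ ?_ ?_
  · intro A hA
    simp only [Finset.mem_product, Finset.mem_powerset]
    exact ⟨Finset.inter_subset_right, Finset.inter_subset_right⟩
  · intro p hp
    simp only [Finset.mem_product, Finset.mem_powerset] at hp ⊢
    exact Finset.union_subset (hp.1.trans Finset.subset_union_left)
      (hp.2.trans Finset.subset_union_right)
  · intro A hA
    simp only [Finset.mem_powerset] at hA
    ext x
    simp only [Finset.mem_union, Finset.mem_inter]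
    constructor
    · rintro (⟨h1, _⟩ | ⟨h1, _⟩) <;> exact h1
    · intro hx
      rcases Finset.mem_union.1 (hA hx) with h | h
      · exact Or.inl ⟨hx, h⟩
      · exact Or.inr ⟨hx, h⟩
  · intro p hp
    simp only [Finset.mem_product, Finset.mem_powerset] at hp
    have h1 : (p.1 ∪ p.2) ∩ s = p.1 := by
      ext x
      simp only [Finset.mem_inter, Finset.mem_union]
      constructor
      · rintro ⟨h | h, hs⟩
        · exact h
        · exact absurd hs (Finset.disjoint_right.1 hdisj (hp.2 h))
      · intro h; exact ⟨Or.inl h, hp.1 h⟩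
    have h2 : (p.1 ∪ p.2) ∩ t = p.2 := by
      ext x
      simp only [Finset.mem_inter, Finset.mem_union]
      constructor
      · rintro ⟨h | h, ht⟩
        · exact absurd ht (Finset.disjoint_left.1 hdisj (hp.1 h))
        · exact h
      · intro h; exact ⟨Or.inr h, hp.2 h⟩
    show ((p.1 ∪ p.2) ∩ s, (p.1 ∪ p.2) ∩ t) = p
    rw [h1, h2]
  · intro A hA
    simp only [Finset.mem_powerset] at hA
    congr 1
    ext x
    simp only [Finset.mem_union, Finset.mem_inter]
    constructor
    · intro hx
      rcases Finset.mem_union.1 (hA hx) with h | h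
      · exact Or.inl ⟨hx, h⟩
      · exact Or.inr ⟨hx, h⟩
    · rintro (⟨h1, _⟩ | ⟨h1, _⟩) <;> exact h1

lemma aux_sum_powerset_pair {α R : Type*} [DecidableEq α] [AddCommMonoid R]
    {s : Finset α} {a : α} (ha : a ∉ s) (g : Finset α → R) :
    ∑ B ∈ (insert a s).powerset, g B = ∑ B ∈ s.powerset, (g B + g (insert a B)) := by
  rw [Finset.powerset_insert, Finset.sum_union, Finset.sum_image, Finset.sum_add_distrib]
  · intro B hB B' hB' h
    simp only [Finset.mem_coe, Finset.mem_powerset] at hB hB'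
    have haB : a ∉ B := fun h' => ha (hB h')
    have haB' : a ∉ B' := fun h' => ha (hB' h')
    rw [← Finset.erase_insert haB, ← Finset.erase_insert haB', h]
  · rw [Finset.disjoint_left]
    intro B hB hB'
    simp only [Finset.mem_powerset] at hB
    obtain ⟨B', hB', rfl⟩ := Finset.mem_image.1 hB'
    exact ha (hB (Finset.mem_insert_self a B'))

end AuxBinom

namespace Matroid
variable [Fintype α] {M : Matroid α} {X Y I J C : Set α} {e : α}

lemma aux_bdd (M : Matroid α) (X : Set α) :
    BddAbove {n | ∃ I, M.Indep I ∧ I ⊆ X ∧ I.ncard = n} := by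
  refine ⟨Fintype.card α, fun n hn => ?_⟩
  obtain ⟨I, _, _, rfl⟩ := hn
  exact (Set.ncard_le_ncard (Set.subset_univ I) Set.finite_univ).trans
    (by simp [Set.ncard_univ])

lemma Indep.ncard_le_mrank (hI : M.Indep I) (hIX : I ⊆ X) : I.ncard ≤ M.mrank X :=
  le_csSup (aux_bdd M X) ⟨I, hI, hIX, rfl⟩

lemma exists_mrank (M : Matroid α) (X : Set α) :
    ∃ I, M.Indep I ∧ I ⊆ X ∧ I.ncard = M.mrank X := by
  have h : M.mrank X ∈ {n | ∃ I, M.Indep I ∧ I ⊆ X ∧ I.ncard = n} :=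
    Nat.sSup_mem ⟨0, ∅, M.empty_indep, Set.empty_subset X, by simp⟩ (aux_bdd M X)
  exact h

lemma mrank_le_of_forall {k : ℕ} (h : ∀ I, M.Indep I → I ⊆ X → I.ncard ≤ k) :
    M.mrank X ≤ k := by
  have hne : {n | ∃ I, M.Indep I ∧ I ⊆ X ∧ I.ncard = n}.Nonempty :=
    ⟨0, ⟨∅, M.empty_indep, Set.empty_subset X, by simp⟩⟩
  apply csSup_le hne
  rintro n ⟨I, hI, hIX, rfl⟩; exact h I hI hIX

lemma mrank_mono (h : X ⊆ Y) : M.mrank X ≤ M.mrank Y :=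
  mrank_le_of_forall fun I hI hIX => hI.ncard_le_mrank (hIX.trans h)

lemma mrank_le_ncard (M : Matroid α) (X : Set α) : M.mrank X ≤ X.ncard :=
  mrank_le_of_forall fun I _ hIX => Set.ncard_le_ncard hIX (Set.toFinite X)

lemma mrank_singleton_eq_one (h : M.Indep {e}) : M.mrank {e} = 1 := by
  refine le_antisymm (by simpa using M.mrank_le_ncard {e}) ?_
  simpa using h.ncard_le_mrank (subset_refl _)

lemma exists_indep_superset (hI : M.Indep I) (hIX : I ⊆ X) :
    ∃ J, M.Indep J ∧ I ⊆ J ∧ J ⊆ X ∧ J.ncard = M.mrank X := by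
  obtain ⟨k, hk⟩ : ∃ k, M.mrank X - I.ncard = k := ⟨_, rfl⟩
  induction k generalizing I with
  | zero =>
    refine ⟨I, hI, subset_rfl, hIX, le_antisymm (hI.ncard_le_mrank hIX) (by omega)⟩
  | succ k ih =>
    obtain ⟨I', hI', hI'X, hcard⟩ := M.exists_mrank X
    have hlt : I.ncard < I'.ncard := by
      have := hI.ncard_le_mrank hIX; omega
    obtain ⟨e, he, hins⟩ := hI.augment hI' (by
      rw [← (Set.toFinite I).cast_ncard_eq, ← (Set.toFinite I').cast_ncard_eq]
      exact_mod_cast hlt)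
    have hcard' : (insert e I).ncard = I.ncard + 1 :=
      Set.ncard_insert_of_notMem he.2 (Set.toFinite I)
    obtain ⟨J, h1, h2, h3, h4⟩ := ih hins (Set.insert_subset (hI'X he.1) hIX) (by omega)
    exact ⟨J, h1, (Set.subset_insert e I).trans h2, h3, h4⟩

lemma IsBase.ncard_eq_mrank (hB : M.IsBase B) : B.ncard = M.mrank M.E := by
  refine le_antisymm (hB.indep.ncard_le_mrank hB.subset_ground) ?_
  obtain ⟨J, hJ, hJB, _, hcard⟩ := exists_indep_superset hB.indep hB.subset_ground
  rw [← hcard, hB.eq_of_subset_indep hJ hJB]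

lemma exists_circuit_of_dep (hIE : I ⊆ M.E) (hdep : ¬ M.Indep I) :
    ∃ C, C ⊆ I ∧ M.IsCircuit' C := by
  obtain ⟨k, hk⟩ : ∃ k, I.ncard = k := ⟨_, rfl⟩
  induction k using Nat.strong_induction_on generalizing I with
  | _ k ih =>
    by_cases h : ∀ D ⊂ I, M.Indep D
    · exact ⟨I, subset_rfl, hIE, hdep, h⟩
    · push_neg at h
      obtain ⟨D, hDI, hD⟩ := h
      obtain ⟨C, hCD, hC⟩ := ih D.ncard
        (hk ▸ Set.ncard_lt_ncard hDI (Set.toFinite I)) (hDI.subset.trans hIE) hD rfl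
      exact ⟨C, hCD.trans hDI.subset, hC⟩

lemma Indep.not_isCircuit_subset (hI : M.Indep I) (hCI : C ⊆ I) : ¬ M.IsCircuit' C :=
  fun hC => hC.2.1 (hI.subset hCI)

lemma indep_iff_no_circuit (hIE : I ⊆ M.E) :
    M.Indep I ↔ ∀ C, C ⊆ I → ¬ M.IsCircuit' C := by
  refine ⟨fun hI C hCI => hI.not_isCircuit_subset hCI, fun h => ?_⟩
  by_contra hdep
  obtain ⟨C, hCI, hC⟩ := exists_circuit_of_dep hIE hdep
  exact h C hCI hC



lemma dual_mrank_add (hX : X ⊆ M.E) :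
    M✶.mrank X + M.mrank M.E = X.ncard + M.mrank (M.E \ X) := by
  refine le_antisymm ?_ ?_
  · -- take J dual-indep in X with |J| = mrank, base B0 disjoint from J
    obtain ⟨J, hJ, hJX, hJcard⟩ := M✶.exists_mrank X
    obtain ⟨hJE, B₀, hB₀, hdisj⟩ := (dual_indep_iff_exists' (M := M)).1 hJ
    have hB₀card : B₀.ncard = M.mrank M.E := hB₀.ncard_eq_mrank
    have hsplit : (B₀ ∩ X).ncard + (B₀ ∩ (M.E \ X)).ncard = B₀.ncard := by
      have hd : B₀ ∩ (M.E \ X) = B₀ \ X := by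
        ext x
        simp only [Set.mem_inter_iff, Set.mem_diff]
        exact ⟨fun h => ⟨h.1, h.2.2⟩, fun h => ⟨h.1, hB₀.subset_ground h.1, h.2⟩⟩
      rw [hd]
      exact Set.ncard_inter_add_ncard_diff_eq_ncard B₀ X (Set.toFinite _)
    have h1 : (B₀ ∩ X).ncard ≤ (X \ J).ncard := by
      apply Set.ncard_le_ncard _ (Set.toFinite _)
      intro x hx
      exact ⟨hx.2, fun hxJ => (hdisj.ne_of_mem hxJ hx.1) rfl⟩
    have h2 : (B₀ ∩ (M.E \ X)).ncard ≤ M.mrank (M.E \ X) :=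
      (hB₀.indep.subset Set.inter_subset_left).ncard_le_mrank Set.inter_subset_right
    have h3 : (X \ J).ncard + J.ncard = X.ncard :=
      Set.ncard_diff_add_ncard_of_subset hJX (Set.toFinite _)
    omega
  · -- basis I of E \ X, extend to base B; X \ B is dual-indep
    obtain ⟨I, hI, hIX, hIcard⟩ := M.exists_mrank (M.E \ X)
    obtain ⟨B, hB, hIB⟩ := hI.exists_isBase_superset
    have hBcard : B.ncard = M.mrank M.E := hB.ncard_eq_mrank
    have hXB : M✶.Indep (X \ B) := by
      rw [dual_indep_iff_exists' (M := M)]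
      exact ⟨(Set.diff_subset).trans hX, B, hB, Set.disjoint_sdiff_left⟩
    have h4 : (X \ B).ncard ≤ M✶.mrank X := hXB.ncard_le_mrank Set.diff_subset
    have hBI : (B ∩ (M.E \ X)).ncard = M.mrank (M.E \ X) := by
      refine le_antisymm ((hB.indep.subset Set.inter_subset_left).ncard_le_mrank
        Set.inter_subset_right) ?_
      rw [← hIcard]
      exact Set.ncard_le_ncard (Set.subset_inter hIB hIX) (Set.toFinite _)
    have hsplit : (B ∩ X).ncard + (B ∩ (M.E \ X)).ncard = B.ncard := by
      have hd : B ∩ (M.E \ X) = B \ X := by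
        ext x
        simp only [Set.mem_inter_iff, Set.mem_diff]
        exact ⟨fun h => ⟨h.1, h.2.2⟩, fun h => ⟨h.1, hB.subset_ground h.1, h.2⟩⟩
      rw [hd]
      exact Set.ncard_inter_add_ncard_diff_eq_ncard B X (Set.toFinite _)
    have h5 : (X \ B).ncard + (B ∩ X).ncard = X.ncard := by
      rw [← Set.ncard_inter_add_ncard_diff_eq_ncard X B (Set.toFinite _), Set.inter_comm]
      omega
    omega

lemma restrict_mrank {R : Set α} (hXR : X ⊆ R) : (M ↾ R).mrank X = M.mrank X := by
  unfold Matroid.mrank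
  congr 1
  ext n
  constructor
  · rintro ⟨I, hI, hIX, rfl⟩
    exact ⟨I, ((M.restrict_indep_iff).1 hI).1, hIX, rfl⟩
  · rintro ⟨I, hI, hIX, rfl⟩
    exact ⟨I, (M.restrict_indep_iff).2 ⟨hI, hIX.trans hXR⟩, hIX, rfl⟩

@[simp] lemma con_ground (M : Matroid α) (C : Set α) : (M.con C).E = M.E \ C := rfl

lemma con_mrank_add (he : M.Indep {e}) (hX : X ⊆ M.E \ {e}) :
    (M.con {e}).mrank X + 1 = M.mrank (insert e X) := by
  have heE : e ∈ M.E := he.subset_ground rfl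
  set R : Set α := M.E \ {e} with hR
  have hRE : R ⊆ M.E := Set.diff_subset
  have e1 : (M.con {e}).mrank X + (M✶ ↾ R).mrank R = X.ncard + (M✶ ↾ R).mrank (R \ X) := by
    have := dual_mrank_add (M := M✶ ↾ R) (X := X) (by simpa using hX)
    simpa [Matroid.con] using this
  have e2 : (M✶ ↾ R).mrank R = M✶.mrank R := restrict_mrank subset_rfl
  have e3 : (M✶ ↾ R).mrank (R \ X) = M✶.mrank (R \ X) := restrict_mrank Set.diff_subset
  have e4 : M✶.mrank R + M.mrank M.E = R.ncard + M.mrank (M.E \ R) := dual_mrank_add hRE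
  have e5 : M.E \ R = {e} := by
    ext x; simp only [hR, Set.mem_diff, Set.mem_singleton_iff]
    constructor
    · rintro ⟨hxE, hx⟩; by_contra h; exact hx ⟨hxE, h⟩
    · rintro rfl; exact ⟨heE, fun h => h.2 rfl⟩
  have e6 : M.mrank {e} = 1 := mrank_singleton_eq_one he
  have e7 : M✶.mrank (R \ X) + M.mrank M.E = (R \ X).ncard + M.mrank (M.E \ (R \ X)) :=
    dual_mrank_add ((Set.diff_subset).trans hRE)
  have e8 : M.E \ (R \ X) = insert e X := by
    ext x
    simp only [hR, Set.mem_diff, Set.mem_singleton_iff, Set.mem_insert_iff, not_and, not_not]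
    constructor
    · rintro ⟨hxE, hx⟩
      by_cases hxe : x = e
      · exact Or.inl hxe
      · exact Or.inr (hx ⟨hxE, hxe⟩)
    · rintro (rfl | hx)
      · exact ⟨heE, fun h => absurd rfl h.2⟩
      · exact ⟨(hX hx).1, fun _ => hx⟩
  have e9 : (R \ X).ncard + X.ncard = R.ncard :=
    Set.ncard_diff_add_ncard_of_subset hX (Set.toFinite _)
  have e10 : M.mrank (insert e X) ≤ M.mrank M.E := by
    apply mrank_mono
    rw [← e8]; exact Set.diff_subset
  rw [e2, e3] at e1
  rw [e5, e6] at e4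
  rw [e8] at e7
  omega

end Matroid

namespace ParallelAux
open Matroid Set
variable [Fintype α] (n : ℕ) (M₀ Cn P : Matroid α) (ε₀ : α)

variable {n M₀ Cn P ε₀}

structure Hyp (n : ℕ) (M₀ Cn P : Matroid α) (ε₀ : α) : Prop where
  hn : 2 ≤ n
  hsimple : M₀.IsSimple
  hε : ε₀ ∈ M₀.E
  hCncirc : ∀ C, Cn.IsCircuit' C ↔ C = Cn.E
  hCncard : Cn.E.ncard = n
  hmeet : Cn.E ∩ M₀.E = {ε₀}
  hPE : P.E = Cn.E ∪ M₀.E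
  hPcirc : ∀ C, P.IsCircuit' C ↔ (Cn.IsCircuit' C ∨ M₀.IsCircuit' C ∨
    ∃ C₁ C₂, Cn.IsCircuit' C₁ ∧ M₀.IsCircuit' C₂ ∧ ε₀ ∈ C₁ ∧ ε₀ ∈ C₂ ∧
      C = (C₁ \ {ε₀}) ∪ (C₂ \ {ε₀}))

namespace Hyp
variable (h : Hyp n M₀ Cn P ε₀)
include h

lemma hεC : ε₀ ∈ Cn.E := by
  have : ε₀ ∈ Cn.E ∩ M₀.E := h.hmeet ▸ rfl
  exact this.1

lemma hKdisj : (Cn.E \ {ε₀}) ∩ M₀.E = ∅ := by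
  ext x
  simp only [Set.mem_inter_iff, Set.mem_diff, Set.mem_singleton_iff, Set.mem_empty_iff_false,
    iff_false, not_and]
  rintro ⟨hx, hne⟩ hxM
  exact hne (by have : x ∈ Cn.E ∩ M₀.E := ⟨hx, hxM⟩; rwa [h.hmeet] at this)

lemma hε₀indep : M₀.Indep {ε₀} :=
  h.hsimple {ε₀} (Set.singleton_subset_iff.2 h.hε) (by simp)

lemma hCnEcirc : Cn.IsCircuit' Cn.E := (h.hCncirc _).2 rfl

lemma hCnEeq : Cn.E = insert ε₀ (Cn.E \ {ε₀}) := by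
  rw [Set.insert_diff_singleton, Set.insert_eq_of_mem h.hεC]

lemma hKcard : (Cn.E \ {ε₀}).ncard + 1 = n := by
  rw [← h.hCncard]
  exact Set.ncard_diff_singleton_add_one h.hεC (Set.toFinite _)

lemma hPE' : P.E = (Cn.E \ {ε₀}) ∪ M₀.E := by
  rw [h.hPE]
  ext x
  simp only [Set.mem_union, Set.mem_diff, Set.mem_singleton_iff]
  constructor
  · rintro (hx | hx)
    · by_cases hxe : x = ε₀
      · exact Or.inr (hxe ▸ h.hε)
      · exact Or.inl ⟨hx, hxe⟩
    · exact Or.inr hx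
  · rintro (⟨hx, _⟩ | hx)
    · exact Or.inl hx
    · exact Or.inr hx

/-- Master characterization of P-independence. -/
lemma P_indep_iff (hJ : J ⊆ (Cn.E \ {ε₀}) ∪ M₀.E) :
    P.Indep J ↔ (M₀.Indep (J ∩ M₀.E) ∧
      ((Cn.E \ {ε₀}) ⊆ J → ε₀ ∉ J ∧ M₀.Indep (insert ε₀ (J ∩ M₀.E)))) := by
  have hJPE : J ⊆ P.E := h.hPE' ▸ hJ
  constructor
  · intro hJind
    have hJ₂ : M₀.Indep (J ∩ M₀.E) := by
      rw [Matroid.indep_iff_no_circuit Set.inter_subset_right]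
      intro C hC hCcirc
      exact ((h.hPcirc C).2 (Or.inr (Or.inl hCcirc))).2.1
        (hJind.subset (hC.trans Set.inter_subset_left))
    refine ⟨hJ₂, fun hKJ => ?_⟩
    have hεJ : ε₀ ∉ J := by
      intro hεJ
      have hCnJ : Cn.E ⊆ J := by
        rw [h.hCnEeq]; exact Set.insert_subset hεJ hKJ
      exact ((h.hPcirc Cn.E).2 (Or.inl h.hCnEcirc)).2.1 (hJind.subset hCnJ)
    refine ⟨hεJ, ?_⟩
    by_contra hdep
    obtain ⟨C, hC, hCcirc⟩ := Matroid.exists_circuit_of_dep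
      (Set.insert_subset h.hε Set.inter_subset_right) hdep
    by_cases hεC' : ε₀ ∈ C
    · -- mixed circuit
      have hmix : P.IsCircuit' ((Cn.E \ {ε₀}) ∪ (C \ {ε₀})) :=
        (h.hPcirc _).2 (Or.inr (Or.inr ⟨Cn.E, C, h.hCnEcirc, hCcirc, h.hεC, hεC', rfl⟩))
      refine hmix.2.1 (hJind.subset (Set.union_subset hKJ ?_))
      intro x hx
      rcases hC hx.1 with rfl | hxJ
      · exact absurd rfl hx.2
      · exact hxJ.1
    · have hCJ : C ⊆ J := by
        intro x hx
        rcases hC hx with rfl | hxJ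
        · exact absurd hx hεC'
        · exact hxJ.1
      exact ((h.hPcirc C).2 (Or.inr (Or.inl hCcirc))).2.1 (hJind.subset hCJ)
  · rintro ⟨hJ₂, hcond⟩
    rw [Matroid.indep_iff_no_circuit hJPE]
    intro C hC hCcirc
    rcases (h.hPcirc C).1 hCcirc with hCn | hM₀ | ⟨C₁, C₂, hC₁, hC₂, hεC₁, hεC₂, rfl⟩
    · rw [(h.hCncirc C).1 hCn] at hC
      have hKJ : (Cn.E \ {ε₀}) ⊆ J := (Set.diff_subset).trans hC
      exact (hcond hKJ).1 (hC h.hεC)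
    · have : C ⊆ J ∩ M₀.E := Set.subset_inter hC hM₀.1
      exact hM₀.2.1 (hJ₂.subset this)
    · rw [(h.hCncirc C₁).1 hC₁] at hC
      have hKJ : (Cn.E \ {ε₀}) ⊆ J := (Set.subset_union_left).trans hC
      obtain ⟨hεJ, hins⟩ := hcond hKJ
      have hC₂J : C₂ ⊆ insert ε₀ (J ∩ M₀.E) := by
        intro x hx
        by_cases hxe : x = ε₀
        · exact hxe ▸ Set.mem_insert _ _
        · have hxJ : x ∈ J := (hC (Or.inr ⟨hx, hxe⟩))
          exact Set.mem_insert_of_mem _ ⟨hxJ, hC₂.1 hx⟩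
      exact hC₂.2.1 (hins.subset hC₂J)


lemma inter_ground_eq {S B : Set α} (hS : S ⊆ Cn.E \ {ε₀}) (hB : B ⊆ M₀.E) :
    (S ∪ B) ∩ M₀.E = B := by
  ext x
  simp only [Set.mem_inter_iff, Set.mem_union]
  constructor
  · rintro ⟨hx | hx, hxM⟩
    · exact absurd (Set.mem_inter (hS hx) hxM) (by rw [h.hKdisj]; exact id)
    · exact hx
  · intro hx; exact ⟨Or.inr hx, hB hx⟩

lemma K_subset_iff {S B : Set α} (hS : S ⊆ Cn.E \ {ε₀}) (hB : B ⊆ M₀.E) :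
    (Cn.E \ {ε₀}) ⊆ S ∪ B ↔ Cn.E \ {ε₀} ⊆ S := by
  constructor
  · intro hKS x hx
    rcases hKS hx with hxS | hxB
    · exact hxS
    · exact absurd (Set.mem_inter hx (hB hxB)) (by rw [h.hKdisj]; exact id)
  · intro hKS; exact hKS.trans Set.subset_union_left

lemma mrank_proper {S B : Set α} (hS : S ⊆ Cn.E \ {ε₀}) (hSne : S ≠ Cn.E \ {ε₀})
    (hB : B ⊆ M₀.E) : P.mrank (S ∪ B) = S.ncard + M₀.mrank B := by
  have hSM : ∀ x ∈ S, x ∉ M₀.E := fun x hx hxM =>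
    absurd (Set.mem_inter (hS hx) hxM) (by rw [h.hKdisj]; exact id)
  refine le_antisymm ?_ ?_
  · apply Matroid.mrank_le_of_forall
    intro J hJind hJsub
    have hJK : J ⊆ (Cn.E \ {ε₀}) ∪ M₀.E :=
      hJsub.trans (Set.union_subset_union hS hB)
    have hJ₂ : M₀.Indep (J ∩ M₀.E) := ((h.P_indep_iff hJK).1 hJind).1
    have hJ₂B : J ∩ M₀.E ⊆ B := by
      intro x hx
      rcases hJsub hx.1 with hxS | hxB
      · exact absurd hx.2 (hSM x hxS)
      · exact hxB
    have h1 : (J ∩ M₀.E).ncard ≤ M₀.mrank B := hJ₂.ncard_le_mrank hJ₂B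
    have h2 : (J \ M₀.E).ncard ≤ S.ncard := by
      apply Set.ncard_le_ncard _ (Set.toFinite _)
      intro x hx
      rcases hJsub hx.1 with hxS | hxB
      · exact hxS
      · exact absurd (hB hxB) hx.2
    have h3 : (J ∩ M₀.E).ncard + (J \ M₀.E).ncard = J.ncard :=
      Set.ncard_inter_add_ncard_diff_eq_ncard J M₀.E (Set.toFinite _)
    omega
  · obtain ⟨I, hI, hIB, hIcard⟩ := Matroid.exists_mrank M₀ B
    have hIM : I ⊆ M₀.E := hIB.trans hB
    have hinter : (S ∪ I) ∩ M₀.E = I := h.inter_ground_eq hS hIM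
    have hJind : P.Indep (S ∪ I) := by
      rw [h.P_indep_iff (Set.union_subset (hS.trans Set.subset_union_left)
        (hIM.trans Set.subset_union_right))]
      refine ⟨by rw [hinter]; exact hI, fun hKJ => absurd ?_ hSne⟩
      exact le_antisymm hS ((h.K_subset_iff hS hIM).1 hKJ)
    have hcard : (S ∪ I).ncard = S.ncard + I.ncard := by
      apply Set.ncard_union_eq _ (Set.toFinite _) (Set.toFinite _)
      exact Set.disjoint_left.2 fun x hxS hxI => hSM x hxS (hIM hxI)
    have := hJind.ncard_le_mrank (Set.union_subset_union subset_rfl hIB)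
    omega

lemma rho_pos {B : Set α} : 1 ≤ M₀.mrank (insert ε₀ B) := by
  have := h.hε₀indep.ncard_le_mrank (X := insert ε₀ B)
    (Set.singleton_subset_iff.2 (Set.mem_insert _ _))
  simpa using this

lemma mrank_full {B : Set α} (hB : B ⊆ M₀.E) :
    P.mrank ((Cn.E \ {ε₀}) ∪ B) + 1 = (n - 1) + M₀.mrank (insert ε₀ B) := by
  set K := Cn.E \ {ε₀} with hK
  set ρ := M₀.mrank (insert ε₀ B) with hρ
  have hρ1 : 1 ≤ ρ := h.rho_pos
  have hKc : K.ncard + 1 = n := h.hKcard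
  have hn := h.hn
  have hεB : ε₀ ∉ K := fun hx => hx.2 rfl
  -- lower bound
  have hlow : (n - 2) + ρ ≤ P.mrank (K ∪ B) := by
    obtain ⟨I, hI, hεI, hIsub, hIcard⟩ := Matroid.exists_indep_superset h.hε₀indep
      (Set.singleton_subset_iff.2 (Set.mem_insert ε₀ B))
    have hεmem : ε₀ ∈ I := hεI rfl
    have hIM : I \ {ε₀} ⊆ M₀.E := by
      intro x hx
      rcases hIsub hx.1 with rfl | hxB
      · exact absurd rfl hx.2
      · exact hB hxB
    have hIB : I \ {ε₀} ⊆ B := by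
      intro x hx
      rcases hIsub hx.1 with rfl | hxB
      · exact absurd rfl hx.2
      · exact hxB
    have hinter : (K ∪ (I \ {ε₀})) ∩ M₀.E = I \ {ε₀} := h.inter_ground_eq subset_rfl hIM
    have hJind : P.Indep (K ∪ (I \ {ε₀})) := by
      rw [h.P_indep_iff (Set.union_subset Set.subset_union_left
        (hIM.trans Set.subset_union_right))]
      refine ⟨by rw [hinter]; exact hI.subset Set.diff_subset, fun _ => ⟨?_, ?_⟩⟩
      · rintro (hx | hx)
        · exact hεB hx
        · exact hx.2 rfl
      · rw [hinter, Set.insert_diff_singleton, Set.insert_eq_of_mem hεmem]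
        exact hI
    have hcard : (K ∪ (I \ {ε₀})).ncard = K.ncard + (I \ {ε₀}).ncard := by
      apply Set.ncard_union_eq _ (Set.toFinite _) (Set.toFinite _)
      exact Set.disjoint_left.2 fun x hxK hxI =>
        absurd (Set.mem_inter hxK (hIM hxI)) (by rw [h.hKdisj]; exact id)
    have hIc : (I \ {ε₀}).ncard + 1 = I.ncard :=
      Set.ncard_diff_singleton_add_one hεmem (Set.toFinite _)
    have := hJind.ncard_le_mrank (Set.union_subset_union subset_rfl hIB)
    omega
  -- upper bound
  have hup : P.mrank (K ∪ B) ≤ (n - 2) + ρ := by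
    apply Matroid.mrank_le_of_forall
    intro J hJind hJsub
    have hJK : J ⊆ K ∪ M₀.E := hJsub.trans (Set.union_subset_union subset_rfl hB)
    obtain ⟨hJ₂, hcond⟩ := (h.P_indep_iff hJK).1 hJind
    have hJ₂B : J ∩ M₀.E ⊆ B := by
      intro x hx
      rcases hJsub hx.1 with hxK | hxB
      · exact absurd (Set.mem_inter hxK hx.2) (by rw [h.hKdisj]; exact id)
      · exact hxB
    have hJ₁K : J \ M₀.E ⊆ K := by
      intro x hx
      rcases hJsub hx.1 with hxK | hxB
      · exact hxK
      · exact absurd (hB hxB) hx.2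
    have h3 : (J ∩ M₀.E).ncard + (J \ M₀.E).ncard = J.ncard :=
      Set.ncard_inter_add_ncard_diff_eq_ncard J M₀.E (Set.toFinite _)
    by_cases hKJ : K ⊆ J
    · obtain ⟨hεJ, hins⟩ := hcond hKJ
      have hεJ₂ : ε₀ ∉ J ∩ M₀.E := fun hx => hεJ hx.1
      have hc1 : (insert ε₀ (J ∩ M₀.E)).ncard = (J ∩ M₀.E).ncard + 1 :=
        Set.ncard_insert_of_notMem hεJ₂ (Set.toFinite _)
      have hc2 : (insert ε₀ (J ∩ M₀.E)).ncard ≤ ρ :=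
        hins.ncard_le_mrank (Set.insert_subset_insert hJ₂B)
      have hc3 : (J \ M₀.E).ncard ≤ K.ncard :=
        Set.ncard_le_ncard hJ₁K (Set.toFinite _)
      omega
    · have hssub : J \ M₀.E ⊂ K := by
        refine Set.ssubset_iff_subset_ne.2 ⟨hJ₁K, fun heq => hKJ ?_⟩
        rw [← heq]; exact Set.diff_subset
      have hc3 : (J \ M₀.E).ncard < K.ncard := Set.ncard_lt_ncard hssub (Set.toFinite _)
      have hc2 : (J ∩ M₀.E).ncard ≤ ρ :=
        hJ₂.ncard_le_mrank (hJ₂B.trans (Set.subset_insert _ _))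
      omega
  omega

end Hyp
end ParallelAux


/-- The Tutte polynomial of the parallel connection `P = P(C_n, M₀)` of the `n`-cycle
matroid `Cn` with a simple matroid `M₀` along `ε₀`:
`T_P = (Σ_{i=0}^{n-2} x^i)·T_{M₀} + y·T_{M₀/ε₀}`. -/
theorem tutte_parallelConnection [Fintype α] (n : ℕ) (hn : 2 ≤ n) (M₀ Cn P : Matroid α)
    (hsimple : M₀.IsSimple) (ε₀ : α) (hε : ε₀ ∈ M₀.E)
    (hCncirc : ∀ C, Cn.IsCircuit' C ↔ C = Cn.E) (hCncard : Cn.E.ncard = n)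
    (hmeet : Cn.E ∩ M₀.E = {ε₀})
    (hPE : P.E = Cn.E ∪ M₀.E)
    (hPcirc : ∀ C, P.IsCircuit' C ↔ (Cn.IsCircuit' C ∨ M₀.IsCircuit' C ∨
      ∃ C₁ C₂, Cn.IsCircuit' C₁ ∧ M₀.IsCircuit' C₂ ∧ ε₀ ∈ C₁ ∧ ε₀ ∈ C₂ ∧
        C = (C₁ \ {ε₀}) ∪ (C₂ \ {ε₀}))) :
    P.tutte = (∑ i ∈ Finset.range (n - 1), X 0 ^ i) * M₀.tutte +
      X 1 * (M₀.con {ε₀}).tutte := by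
  classical
  have h : ParallelAux.Hyp n M₀ Cn P ε₀ := ⟨hn, hsimple, hε, hCncirc, hCncard, hmeet, hPE, hPcirc⟩
  have hKcoe : ((Cn.E \ {ε₀}).toFinset : Set α) = Cn.E \ {ε₀} := Set.coe_toFinset _
  have hEcoe : ((M₀.E).toFinset : Set α) = M₀.E := Set.coe_toFinset _
  set KF : Finset α := (Cn.E \ {ε₀}).toFinset with hKFdef
  set EF : Finset α := (M₀.E).toFinset with hEFdef
  have hdisjF : Disjoint KF EF := by
    rw [Finset.disjoint_left]
    intro a haK haE
    have : a ∈ (Cn.E \ {ε₀}) ∩ M₀.E := ⟨Set.mem_toFinset.mp haK, Set.mem_toFinset.mp haE⟩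
    rw [h.hKdisj] at this
    exact this
  have hKFcard : KF.card + 1 = n := by
    have := h.hKcard
    rwa [Set.ncard_eq_toFinset_card'] at this
  have hεEF : ε₀ ∈ EF := Set.mem_toFinset.mpr hε
  have hrPE : P.mrank P.E + 1 = (n - 1) + M₀.mrank M₀.E := by
    have h2 := h.mrank_full (B := M₀.E) subset_rfl
    rwa [Set.insert_eq_of_mem hε, ← h.hPE'] at h2
  have hconE : (M₀.con {ε₀}).E = M₀.E \ {ε₀} := rfl
  have hrCeq : (M₀.con {ε₀}).mrank (M₀.E \ {ε₀}) + 1 = M₀.mrank M₀.E := by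
    have h2 := Matroid.con_mrank_add (M := M₀) h.hε₀indep (X := M₀.E \ {ε₀}) subset_rfl
    rwa [Set.insert_diff_singleton, Set.insert_eq_of_mem hε] at h2
  -- rewrite the three Tutte polynomials as powerset sums
  have hfilter₀ : Finset.univ.filter (fun A : Finset α => (A : Set α) ⊆ M₀.E)
      = EF.powerset := by
    ext A
    simp only [Finset.mem_filter, Finset.mem_univ, true_and, Finset.mem_powerset]
    rw [← hEcoe, Finset.coe_subset]
  have hT₀ : M₀.tutte = ∑ B ∈ EF.powerset,
      (X 0 - 1 : MvPolynomial (Fin 2) ℤ) ^ (M₀.mrank M₀.E - M₀.mrank (B : Set α)) *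
        (X 1 - 1) ^ (B.card - M₀.mrank (B : Set α)) := by
    rw [Matroid.tutte, hfilter₀]
  have hfilterC : Finset.univ.filter (fun A : Finset α => (A : Set α) ⊆ (M₀.con {ε₀}).E)
      = (EF.erase ε₀).powerset := by
    ext A
    simp only [Finset.mem_filter, Finset.mem_univ, true_and, Finset.mem_powerset, hconE]
    rw [← hEcoe, ← Finset.coe_erase, Finset.coe_subset]
  have hTC : (M₀.con {ε₀}).tutte = ∑ B ∈ (EF.erase ε₀).powerset,
      (X 0 - 1 : MvPolynomial (Fin 2) ℤ) ^
          ((M₀.con {ε₀}).mrank (M₀.E \ {ε₀}) - (M₀.con {ε₀}).mrank (B : Set α)) *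
        (X 1 - 1) ^ (B.card - (M₀.con {ε₀}).mrank (B : Set α)) := by
    rw [Matroid.tutte, hfilterC, hconE]
  have hfilterP : Finset.univ.filter (fun A : Finset α => (A : Set α) ⊆ P.E)
      = (KF ∪ EF).powerset := by
    ext A
    simp only [Finset.mem_filter, Finset.mem_univ, true_and, Finset.mem_powerset]
    rw [h.hPE', ← hKcoe, ← hEcoe, ← Finset.coe_union, Finset.coe_subset]
  rw [Matroid.tutte, hfilterP, aux_sum_powerset_union hdisjF,
    ← Finset.sum_erase_add _ _ (Finset.mem_powerset_self KF)]
  congr 1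
  · -- proper part
    have h1 : ∀ S ∈ KF.powerset.erase KF,
        (∑ B ∈ EF.powerset,
          (X 0 - 1 : MvPolynomial (Fin 2) ℤ) ^ (P.mrank P.E - P.mrank ((S ∪ B : Finset α) : Set α)) *
            (X 1 - 1) ^ ((S ∪ B).card - P.mrank ((S ∪ B : Finset α) : Set α))) =
        (X 0 - 1) ^ (KF.card - 1 - S.card) * ∑ B ∈ EF.powerset,
          (X 0 - 1 : MvPolynomial (Fin 2) ℤ) ^ (M₀.mrank M₀.E - M₀.mrank (B : Set α)) *
            (X 1 - 1) ^ (B.card - M₀.mrank (B : Set α)) := by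
      intro S hS
      have hSps : S ⊆ KF := Finset.mem_powerset.1 (Finset.mem_of_mem_erase hS)
      have hSne' : S ≠ KF := Finset.ne_of_mem_erase hS
      have hScard : S.card < KF.card := Finset.card_lt_card (hSps.ssubset_of_ne hSne')
      have hSsub : (S : Set α) ⊆ Cn.E \ {ε₀} := by
        rw [← hKcoe]; exact Finset.coe_subset.2 hSps
      have hSneS : (S : Set α) ≠ Cn.E \ {ε₀} := by
        rw [← hKcoe]; exact fun hh => hSne' (Finset.coe_injective hh)
      rw [Finset.mul_sum]
      refine Finset.sum_congr rfl fun B hB => ?_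
      have hBps : B ⊆ EF := Finset.mem_powerset.1 hB
      have hBsub : (B : Set α) ⊆ M₀.E := by
        rw [← hEcoe]; exact Finset.coe_subset.2 hBps
      have hmr : P.mrank ((S ∪ B : Finset α) : Set α) = S.card + M₀.mrank (B : Set α) := by
        rw [Finset.coe_union, h.mrank_proper hSsub hSneS hBsub, Set.ncard_coe_finset]
      have hcardU : (S ∪ B).card = S.card + B.card :=
        Finset.card_union_of_disjoint
          (Finset.disjoint_of_subset_left hSps (Finset.disjoint_of_subset_right hBps hdisjF))
      have hle1 : M₀.mrank (B : Set α) ≤ M₀.mrank M₀.E := Matroid.mrank_mono hBsub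
      have hle2 : M₀.mrank (B : Set α) ≤ B.card := by
        have := M₀.mrank_le_ncard (B : Set α)
        rwa [Set.ncard_coe_finset] at this
      rw [show P.mrank P.E - P.mrank ((S ∪ B : Finset α) : Set α)
            = (KF.card - 1 - S.card) + (M₀.mrank M₀.E - M₀.mrank (B : Set α)) from by omega,
          show (S ∪ B).card - P.mrank ((S ∪ B : Finset α) : Set α)
            = B.card - M₀.mrank (B : Set α) from by omega,
          pow_add, mul_assoc]
    rw [Finset.sum_congr rfl h1, ← Finset.sum_mul, aux_powerset_sum, ← hT₀,
      show (X 0 - 1 : MvPolynomial (Fin 2) ℤ) + 1 = X 0 from by ring,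
      show KF.card = n - 1 from by omega]
  · -- full part : S = KF
    have hpair := aux_sum_powerset_pair (Finset.notMem_erase ε₀ EF)
      (fun B => (X 0 - 1 : MvPolynomial (Fin 2) ℤ) ^
          (P.mrank P.E - P.mrank ((KF ∪ B : Finset α) : Set α)) *
        (X 1 - 1) ^ ((KF ∪ B).card - P.mrank ((KF ∪ B : Finset α) : Set α)))
    rw [Finset.insert_erase hεEF] at hpair
    rw [hpair, hTC, Finset.mul_sum]
    refine Finset.sum_congr rfl fun B' hB' => ?_
    have hB'ps : B' ⊆ EF.erase ε₀ := Finset.mem_powerset.1 hB'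
    have hB'sub : (B' : Set α) ⊆ M₀.E \ {ε₀} := by
      rw [← hEcoe, ← Finset.coe_erase]; exact Finset.coe_subset.2 hB'ps
    have hB'subE : (B' : Set α) ⊆ M₀.E := hB'sub.trans Set.diff_subset
    have hεB' : ε₀ ∉ B' := fun hh => (Finset.mem_erase.1 (hB'ps hh)).1 rfl
    have hB'EF : B' ⊆ EF := hB'ps.trans (Finset.erase_subset _ _)
    have hmr1 : P.mrank ((KF ∪ B' : Finset α) : Set α) + 1
        = (n - 1) + M₀.mrank (insert ε₀ (B' : Set α)) := by
      rw [Finset.coe_union, hKcoe]; exact h.mrank_full hB'subE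
    have hmr2 : P.mrank ((KF ∪ insert ε₀ B' : Finset α) : Set α) + 1
        = (n - 1) + M₀.mrank (insert ε₀ (B' : Set α)) := by
      rw [Finset.coe_union, Finset.coe_insert, hKcoe]
      have h2 := h.mrank_full (B := insert ε₀ (B' : Set α)) (Set.insert_subset hε hB'subE)
      rwa [Set.insert_idem] at h2
    have hcard1 : (KF ∪ B').card = KF.card + B'.card :=
      Finset.card_union_of_disjoint (Finset.disjoint_of_subset_right hB'EF hdisjF)
    have hcard2 : (KF ∪ insert ε₀ B').card = KF.card + (B'.card + 1) := by
      rw [Finset.card_union_of_disjoint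
          (Finset.disjoint_of_subset_right (Finset.insert_subset hεEF hB'EF) hdisjF),
        Finset.card_insert_of_notMem hεB']
    have hρle : M₀.mrank (insert ε₀ (B' : Set α)) ≤ M₀.mrank M₀.E :=
      Matroid.mrank_mono (Set.insert_subset hε hB'subE)
    have hρ1 : 1 ≤ M₀.mrank (insert ε₀ (B' : Set α)) := h.rho_pos
    have hρcard : M₀.mrank (insert ε₀ (B' : Set α)) ≤ B'.card + 1 := by
      have h2 := M₀.mrank_le_ncard (insert ε₀ (B' : Set α))
      have h3 := Set.ncard_insert_le ε₀ (B' : Set α)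
      rw [Set.ncard_coe_finset] at h3
      omega
    have hcon : (M₀.con {ε₀}).mrank (B' : Set α) + 1 = M₀.mrank (insert ε₀ (B' : Set α)) :=
      Matroid.con_mrank_add h.hε₀indep hB'sub
    rw [show P.mrank P.E - P.mrank ((KF ∪ B' : Finset α) : Set α)
          = M₀.mrank M₀.E - M₀.mrank (insert ε₀ (B' : Set α)) from by omega,
        show (KF ∪ B').card - P.mrank ((KF ∪ B' : Finset α) : Set α)
          = B'.card + 1 - M₀.mrank (insert ε₀ (B' : Set α)) from by omega,
        show P.mrank P.E - P.mrank ((KF ∪ insert ε₀ B' : Finset α) : Set α)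
          = M₀.mrank M₀.E - M₀.mrank (insert ε₀ (B' : Set α)) from by omega,
        show (KF ∪ insert ε₀ B').card - P.mrank ((KF ∪ insert ε₀ B' : Finset α) : Set α)
          = (B'.card + 1 - M₀.mrank (insert ε₀ (B' : Set α))) + 1 from by omega,
        show (M₀.con {ε₀}).mrank (M₀.E \ {ε₀}) - (M₀.con {ε₀}).mrank (B' : Set α)
          = M₀.mrank M₀.E - M₀.mrank (insert ε₀ (B' : Set α)) from by omega,
        show B'.card - (M₀.con {ε₀}).mrank (B' : Set α)
          = B'.card + 1 - M₀.mrank (insert ε₀ (B' : Set α)) from by omega,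
        pow_succ]
    ring
end

section
/- Let M_0 be a simple matroid with element ε_0 that is not an isthmus (coloop), and n ≥ 2. Let M_n = C_n ⊕ M_0 and M'_n = P(C_n, M_0) ⊕ S, where S is an isthmus. Then T_{M_n}(x,y) ≠ T_{M'_n}(x,y). -/
open MvPolynomial Classical
open scoped Matroid

variable {α β : Type*}

set_option linter.unusedSectionVars false

-- Section 1 : mrank facts
lemma mrank_set_nonempty (M : Matroid α) (Xs : Set α) :
    {n | ∃ I, M.Indep I ∧ I ⊆ Xs ∧ I.ncard = n}.Nonempty :=
  ⟨0, ∅, M.empty_indep, Set.empty_subset _, Set.ncard_empty _⟩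

lemma mrank_set_bdd (M : Matroid α) (A : Finset α) :
    ∀ m ∈ {n | ∃ I, M.Indep I ∧ I ⊆ (A : Set α) ∧ I.ncard = n}, m ≤ A.card := by
  rintro m ⟨I, _, hIA, rfl⟩
  simpa [Set.ncard_coe_finset] using Set.ncard_le_ncard hIA A.finite_toSet

lemma mrank_coe_le (M : Matroid α) (A : Finset α) : M.mrank ↑A ≤ A.card :=
  csSup_le (mrank_set_nonempty M _) (mrank_set_bdd M A)

lemma mrank_eq_card_iff_indep (M : Matroid α) (A : Finset α) :
    M.mrank ↑A = A.card ↔ M.Indep ↑A := by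
  constructor
  · intro h
    have hmem := Nat.sSup_mem (mrank_set_nonempty M (A : Set α))
      ⟨A.card, mrank_set_bdd M A⟩
    obtain ⟨I, hI, hIA, hIc⟩ := hmem
    have : I = (A : Set α) := by
      apply Set.eq_of_subset_of_ncard_le hIA _ A.finite_toSet
      rw [hIc, Set.ncard_coe_finset, ← h]
      rfl
    exact this ▸ hI
  · intro h
    refine le_antisymm (mrank_coe_le M A) ?_
    exact le_csSup ⟨A.card, mrank_set_bdd M A⟩ ⟨A, h, subset_rfl, Set.ncard_coe_finset A⟩


noncomputable def indCount [Fintype α] (M : Matroid α) : ℕ :=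
  (Finset.univ.filter (fun A : Finset α => (A : Set α) ⊆ M.E ∧ M.Indep ↑A)).card

lemma eval_tutte [Fintype α] (M : Matroid α) :
    eval (fun i : Fin 2 => if i = 0 then (2:ℤ) else 1) M.tutte = indCount M := by
  rw [Matroid.tutte, map_sum]
  have : ∀ A ∈ Finset.univ.filter (fun A : Finset α => (A : Set α) ⊆ M.E),
      eval (fun i : Fin 2 => if i = 0 then (2:ℤ) else 1)
        ((X 0 - 1) ^ (M.mrank M.E - M.mrank (A : Set α)) *
          (X 1 - 1) ^ (A.card - M.mrank (A : Set α)))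
      = if M.Indep (A : Set α) then 1 else 0 := by
    intro A _
    simp only [map_mul, map_pow, map_sub, eval_X, map_one]
    norm_num
    rw [zero_pow_eq]
    have : A.card - M.mrank ↑A = 0 ↔ M.Indep ↑A := by
      rw [Nat.sub_eq_zero_iff_le]
      constructor
      · intro h; exact (mrank_eq_card_iff_indep M A).1 (le_antisymm (mrank_coe_le M A) h)
      · intro h; exact le_of_eq ((mrank_eq_card_iff_indep M A).2 h).symm
    by_cases h : M.Indep (A : Set α) <;> simp [this, h]
  rw [Finset.sum_congr rfl this, Finset.sum_ite, Finset.sum_const, Finset.sum_const_zero, add_zero,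
    Finset.filter_filter, indCount]
  simp


lemma exists_circuit_subset [Fintype α] (M : Matroid α) (A : Set α) (hE : A ⊆ M.E)
    (hd : ¬ M.Indep A) : ∃ C, C ⊆ A ∧ M.IsCircuit' C := by
  have key : ∀ (k : ℕ) (A : Set α), A.ncard ≤ k → A ⊆ M.E → ¬ M.Indep A →
      ∃ C, C ⊆ A ∧ M.IsCircuit' C := by
    intro k
    induction k with
    | zero =>
      intro A hc hE hd
      have : A = ∅ := by
        have := A.toFinite
        rw [← Set.ncard_eq_zero this]; omega
      exact absurd (this ▸ M.empty_indep) hd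
    | succ k ih =>
      intro A hc hE hd
      by_cases h : ∀ D ⊂ A, M.Indep D
      · exact ⟨A, subset_rfl, hE, hd, h⟩
      · push_neg at h
        obtain ⟨D, hDA, hDd⟩ := h
        have hlt : D.ncard < A.ncard := Set.ncard_lt_ncard hDA A.toFinite
        obtain ⟨C, hCD, hC⟩ := ih D (by omega) (hDA.subset.trans hE) hDd
        exact ⟨C, hCD.trans hDA.subset, hC⟩
  exact key A.ncard A le_rfl hE hd

lemma indep_iff_no_circuit [Fintype α] (M : Matroid α) (A : Set α) (hE : A ⊆ M.E) :
    M.Indep A ↔ ∀ C, C ⊆ A → ¬ M.IsCircuit' C := by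
  constructor
  · intro hA C hCA hC
    exact hC.2.1 (hA.subset hCA)
  · intro h
    by_contra hd
    obtain ⟨C, hCA, hC⟩ := exists_circuit_subset M A hE hd
    exact h C hCA hC


lemma card_filter_product {γ δ : Type*} (s : Finset γ) (t : Finset δ)
    (R : γ → δ → Prop) [∀ a, DecidablePred (R a)] [DecidablePred fun x : γ × δ => R x.1 x.2] :
    ((s ×ˢ t).filter (fun x => R x.1 x.2)).card = ∑ a ∈ s, (t.filter (R a)).card := by
  rw [Finset.card_filter, Finset.sum_product]
  refine Finset.sum_congr rfl fun a _ => ?_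
  rw [Finset.card_filter]
  exact Finset.sum_congr rfl fun b _ => if_congr Iff.rfl rfl rfl

lemma inter_union_left [DecidableEq α] {u v x y : Finset α} (huv : Disjoint u v)
    (h1 : x ⊆ u) (h2 : y ⊆ v) : (x ∪ y) ∩ u = x := by
  ext z
  simp only [Finset.mem_inter, Finset.mem_union]
  constructor
  · rintro ⟨h | h, hu⟩
    · exact h
    · exact absurd hu (Finset.disjoint_left.1 huv.symm (h2 h))
  · exact fun h => ⟨Or.inl h, h1 h⟩

lemma inter_union_right [DecidableEq α] {u v x y : Finset α} (huv : Disjoint u v)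
    (h1 : x ⊆ u) (h2 : y ⊆ v) : (x ∪ y) ∩ v = y := by
  have := inter_union_left (huv.symm) h2 h1
  rwa [Finset.union_comm] at this

lemma card_filter_union_split [DecidableEq α] (u v : Finset α) (huv : Disjoint u v)
    (p : Finset α → Prop) [DecidablePred p] (R : Finset α → Finset α → Prop)
    [∀ a, DecidablePred (R a)]
    (hp : ∀ A, A ⊆ u ∪ v → (p A ↔ R (A ∩ u) (A ∩ v))) :
    ((u ∪ v).powerset.filter p).card = ∑ a ∈ u.powerset, (v.powerset.filter (R a)).card := by
  classical
  rw [← card_filter_product]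
  apply Finset.card_bij' (fun A _ => (A ∩ u, A ∩ v)) (fun x _ => x.1 ∪ x.2)
  · intro A hA
    simp only [Finset.mem_filter, Finset.mem_powerset] at hA
    simp only [Finset.mem_filter, Finset.mem_product, Finset.mem_powerset]
    exact ⟨⟨Finset.inter_subset_right, Finset.inter_subset_right⟩, (hp A hA.1).1 hA.2⟩
  · intro x hx
    simp only [Finset.mem_filter, Finset.mem_product, Finset.mem_powerset] at hx
    obtain ⟨⟨h1, h2⟩, hR⟩ := hx
    simp only [Finset.mem_filter, Finset.mem_powerset]
    refine ⟨Finset.union_subset_union h1 h2, (hp _ (Finset.union_subset_union h1 h2)).2 ?_⟩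
    rw [inter_union_left huv h1 h2, inter_union_right huv h1 h2]
    exact hR
  · intro A hA
    simp only [Finset.mem_filter, Finset.mem_powerset] at hA
    rw [← Finset.inter_union_distrib_left, Finset.inter_eq_left.2 hA.1]
  · intro x hx
    simp only [Finset.mem_filter, Finset.mem_product, Finset.mem_powerset] at hx
    obtain ⟨⟨h1, h2⟩, _⟩ := hx
    rw [inter_union_left huv h1 h2, inter_union_right huv h1 h2]


lemma filter_univ_eq_powerset [Fintype α] (g : Finset α) (q : Finset α → Prop)
    [DecidablePred q] [DecidablePred (fun A : Finset α => (A : Set α) ⊆ (↑g : Set α) ∧ q A)] :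
    (Finset.univ.filter (fun A : Finset α => (A : Set α) ⊆ (↑g : Set α) ∧ q A))
      = g.powerset.filter q := by
  ext A
  simp [Finset.mem_powerset]

section SumCount
variable {γ δ : Type*} [Fintype γ] [Fintype δ]

private lemma preim_inl (a : Finset γ) (b : Finset δ) :
    Sum.inl ⁻¹' (↑(a.map ⟨Sum.inl, Sum.inl_injective⟩ ∪ b.map ⟨Sum.inr, Sum.inr_injective⟩) :
      Set (γ ⊕ δ)) = ↑a := by
  ext x; simp

private lemma preim_inr (a : Finset γ) (b : Finset δ) :
    Sum.inr ⁻¹' (↑(a.map ⟨Sum.inl, Sum.inl_injective⟩ ∪ b.map ⟨Sum.inr, Sum.inr_injective⟩) :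
      Set (γ ⊕ δ)) = ↑b := by
  ext x; simp

lemma indCount_sum (M : Matroid γ) (N : Matroid δ) :
    indCount (M.sum N) = indCount M * indCount N := by
  classical
  rw [indCount, indCount, indCount, ← Finset.card_product]
  have hfp : (Finset.univ.filter (fun a : Finset γ => (a : Set γ) ⊆ M.E ∧ M.Indep ↑a)) ×ˢ
      (Finset.univ.filter (fun b : Finset δ => (b : Set δ) ⊆ N.E ∧ N.Indep ↑b))
      = (Finset.univ ×ˢ Finset.univ).filter
        (fun x : Finset γ × Finset δ => ((x.1 : Set γ) ⊆ M.E ∧ M.Indep ↑x.1) ∧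
          ((x.2 : Set δ) ⊆ N.E ∧ N.Indep ↑x.2)) := by
    ext x; simp [Finset.mem_product, and_assoc]
  rw [hfp]
  refine Finset.card_bij'
    (fun A _ => (A.preimage Sum.inl Sum.inl_injective.injOn,
                 A.preimage Sum.inr Sum.inr_injective.injOn))
    (fun x _ => x.1.map ⟨Sum.inl, Sum.inl_injective⟩ ∪ x.2.map ⟨Sum.inr, Sum.inr_injective⟩)
    ?_ ?_ ?_ ?_
  · intro A hA
    simp only [Finset.mem_filter, Finset.mem_univ, true_and] at hA
    obtain ⟨hAE, hAI⟩ := hA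
    rw [Matroid.sum_indep_iff] at hAI
    simp only [Finset.mem_filter, Finset.mem_product, Finset.mem_univ, true_and,
      Finset.coe_preimage]
    rw [Matroid.sum_ground] at hAE
    refine ⟨⟨?_, hAI.1⟩, ?_, hAI.2⟩
    · intro x hx
      rcases hAE hx with h | h
      · obtain ⟨y, hy, hxy⟩ := h
        exact (Sum.inl_injective hxy) ▸ hy
      · obtain ⟨y, _, hxy⟩ := h
        exact absurd hxy (by simp)
    · intro x hx
      rcases hAE hx with h | h
      · obtain ⟨y, _, hxy⟩ := h
        exact absurd hxy (by simp)
      · obtain ⟨y, hy, hxy⟩ := h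
        exact (Sum.inr_injective hxy) ▸ hy
  · intro x hx
    simp only [Finset.mem_filter, Finset.mem_product, Finset.mem_univ, true_and] at hx
    obtain ⟨⟨h1E, h1I⟩, h2E, h2I⟩ := hx
    simp only [Finset.mem_filter, Finset.mem_univ, true_and]
    constructor
    · rw [Matroid.sum_ground]
      intro z hz
      simp only [Finset.coe_union, Finset.coe_map, Function.Embedding.coeFn_mk,
        Set.mem_union] at hz
      rcases hz with ⟨y, hy, rfl⟩ | ⟨y, hy, rfl⟩
      · exact Or.inl ⟨y, h1E hy, rfl⟩
      · exact Or.inr ⟨y, h2E hy, rfl⟩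
    · rw [Matroid.sum_indep_iff, preim_inl, preim_inr]
      exact ⟨h1I, h2I⟩
  · intro A _
    ext z
    cases z <;> simp
  · intro x _
    refine Prod.ext ?_ ?_
    · ext z
      simp
    · ext z
      simp
end SumCount


lemma indCount_freeOn_unit : indCount (Matroid.freeOn (Set.univ : Set Unit)) = 2 := by
  classical
  rw [indCount]
  have : (Finset.univ.filter (fun A : Finset Unit =>
      (A : Set Unit) ⊆ (Matroid.freeOn (Set.univ : Set Unit)).E ∧
        (Matroid.freeOn (Set.univ : Set Unit)).Indep ↑A)) = Finset.univ := by
    ext A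
    simp [Matroid.freeOn_indep_iff]
  rw [this, Finset.card_univ, Fintype.card_finset]
  rfl

-- count of independent subsets of a circuit matroid
lemma indCount_circuitOn [Fintype α] (n : ℕ) (Cn : Matroid α)
    (hCncirc : ∀ C, Cn.IsCircuit' C ↔ C = Cn.E) (hCncard : Cn.E.ncard = n) :
    indCount Cn = 2 ^ n - 1 := by
  classical
  have hfin : Cn.E.Finite := Set.toFinite _
  set k := hfin.toFinset with hkdef
  have hk : (k : Set α) = Cn.E := hfin.coe_toFinset
  have hcirc : Cn.IsCircuit' Cn.E := (hCncirc Cn.E).2 rfl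
  rw [indCount]
  have h1 : (Finset.univ.filter (fun A : Finset α =>
      (A : Set α) ⊆ Cn.E ∧ Cn.Indep ↑A)) = k.powerset.filter (fun A : Finset α => Cn.Indep (↑A : Set α)) := by
    rw [← hk]
    exact filter_univ_eq_powerset k _
  rw [h1]
  have h2 : k.powerset.filter (fun A : Finset α => Cn.Indep (↑A : Set α)) = k.powerset.erase k := by
    ext A
    simp only [Finset.mem_filter, Finset.mem_erase, Finset.mem_powerset]
    constructor
    · rintro ⟨hAk, hAI⟩
      refine ⟨fun h => ?_, hAk⟩
      subst h
      exact hcirc.2.1 (hk ▸ hAI)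
    · rintro ⟨hne, hAk⟩
      have hss : (A : Set α) ⊂ Cn.E := by
        rw [← hk]
        exact Finset.coe_ssubset.2 (lt_of_le_of_ne hAk hne)
      exact ⟨hAk, hcirc.2.2 _ hss⟩
  rw [h2, Finset.card_erase_of_mem (Finset.mem_powerset_self k), Finset.card_powerset]
  have : k.card = n := by
    rw [← hCncard, Set.ncard_eq_toFinset_card _ hfin]
  rw [this]


lemma indCount_P_lt [Fintype α] (n : ℕ) (hn : 2 ≤ n) (M₀ Cn P : Matroid α)
    (ε₀ : α) (hε : ε₀ ∈ M₀.E)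
    (hCncirc : ∀ C, Cn.IsCircuit' C ↔ C = Cn.E) (hCncard : Cn.E.ncard = n)
    (hmeet : Cn.E ∩ M₀.E = {ε₀})
    (hPE : P.E = Cn.E ∪ M₀.E)
    (hPcirc : ∀ C, P.IsCircuit' C ↔ (Cn.IsCircuit' C ∨ M₀.IsCircuit' C ∨
      ∃ C₁ C₂, Cn.IsCircuit' C₁ ∧ M₀.IsCircuit' C₂ ∧ ε₀ ∈ C₁ ∧ ε₀ ∈ C₂ ∧
        C = (C₁ \ {ε₀}) ∪ (C₂ \ {ε₀})))
    (hcoloop : ¬ M₀.IsColoop' ε₀) :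
    indCount P * 2 < (2 ^ n - 1) * indCount M₀ := by
  classical
  set e := ε₀ with he_def
  -- finite ground sets as finsets
  have hKfin : Cn.E.Finite := Set.toFinite _
  have hFfin : M₀.E.Finite := Set.toFinite _
  set k := hKfin.toFinset with hkdef
  set f := hFfin.toFinset with hfdef
  have hk : (k : Set α) = Cn.E := hKfin.coe_toFinset
  have hf : (f : Set α) = M₀.E := hFfin.coe_toFinset
  have heK : e ∈ Cn.E := by
    have : e ∈ Cn.E ∩ M₀.E := hmeet ▸ rfl
    exact this.1
  have he_k : e ∈ k := by rw [← Finset.mem_coe, hk]; exact heK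
  have he_f : e ∈ f := by rw [← Finset.mem_coe, hf]; exact hε
  set u := k.erase e with hudef
  have hu_coe : (u : Set α) = Cn.E \ {e} := by
    rw [hudef, Finset.coe_erase, hk]
  have huv : Disjoint u f := by
    rw [Finset.disjoint_left]
    intro x hxu hxf
    have hxK : x ∈ Cn.E := by
      have := Finset.mem_of_mem_erase hxu
      rwa [← Finset.mem_coe, hk] at this
    have hxF : x ∈ M₀.E := by rwa [← Finset.mem_coe, hf] at hxf
    have : x ∈ ({e} : Set α) := hmeet ▸ ⟨hxK, hxF⟩
    exact (Finset.ne_of_mem_erase hxu) this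
  have hPE' : P.E = ((u ∪ f : Finset α) : Set α) := by
    rw [Finset.coe_union, hu_coe, hf, hPE]
    ext x
    constructor
    · rintro (hx | hx)
      · by_cases hxe : x = e
        · exact Or.inr (hxe ▸ hε)
        · exact Or.inl ⟨hx, hxe⟩
      · exact Or.inr hx
    · rintro (⟨hx, _⟩ | hx)
      · exact Or.inl hx
      · exact Or.inr hx
  -- the key circuit description for P
  have hPcirc' : ∀ C, P.IsCircuit' C ↔ (C = Cn.E ∨ M₀.IsCircuit' C ∨
      ∃ C₂, M₀.IsCircuit' C₂ ∧ e ∈ C₂ ∧ C = (Cn.E \ {e}) ∪ (C₂ \ {e})) := by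
    intro C
    rw [hPcirc]
    constructor
    · rintro (h | h | ⟨C₁, C₂, h1, h2, _, he2, rfl⟩)
      · exact Or.inl ((hCncirc C).1 h)
      · exact Or.inr (Or.inl h)
      · exact Or.inr (Or.inr ⟨C₂, h2, he2, by rw [(hCncirc C₁).1 h1]⟩)
    · rintro (h | h | ⟨C₂, h2, he2, rfl⟩)
      · exact Or.inl ((hCncirc C).2 h)
      · exact Or.inr (Or.inl h)
      · exact Or.inr (Or.inr ⟨Cn.E, C₂, (hCncirc _).2 rfl, h2, heK, he2, rfl⟩)
  -- the fiber predicate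
  set R : Finset α → Finset α → Prop := fun a c =>
    if e ∈ c then (a ≠ u ∧ M₀.Indep (↑c : Set α))
    else (if a = u then M₀.Indep ((↑c : Set α) ∪ {e}) else M₀.Indep (↑c : Set α))
    with hRdef
  -- main equivalence
  have hp : ∀ A, A ⊆ u ∪ f → (P.Indep (↑A : Set α) ↔ R (A ∩ u) (A ∩ f)) := by
    intro A hA
    have h𝒜E : (↑A : Set α) ⊆ P.E := by
      rw [hPE']
      exact Finset.coe_subset.2 hA
    have hAfF : ((A ∩ f : Finset α) : Set α) = (↑A : Set α) ∩ M₀.E := by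
      rw [Finset.coe_inter, hf]
    have hAfsubF : ((A ∩ f : Finset α) : Set α) ⊆ M₀.E := by
      rw [hAfF]; exact Set.inter_subset_right
    have hAfsubA : ((A ∩ f : Finset α) : Set α) ⊆ ↑A := by
      rw [hAfF]; exact Set.inter_subset_left
    have heA : e ∈ A ↔ e ∈ A ∩ f := by
      simp [Finset.mem_inter, he_f]
    -- K \ {e} ⊆ A iff A ∩ u = u
    have hK'iff : Cn.E \ {e} ⊆ (↑A : Set α) ↔ A ∩ u = u := by
      constructor
      · intro h
        refine Finset.Subset.antisymm Finset.inter_subset_right ?_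
        intro z hz
        have hz' : (z : α) ∈ Cn.E \ {e} := by
          rw [← hu_coe]; exact hz
        exact Finset.mem_inter.2 ⟨Finset.mem_coe.1 (h hz'), hz⟩
      · intro h z hz
        have : z ∈ u := by rw [← hu_coe] at hz; exact hz
        have hzz : z ∈ A ∩ u := by rw [h]; exact this
        exact Finset.mem_coe.2 (Finset.mem_inter.1 hzz).1
    have hKiff : Cn.E ⊆ (↑A : Set α) ↔ (e ∈ A ∧ A ∩ u = u) := by
      constructor
      · intro h
        exact ⟨Finset.mem_coe.1 (h heK), hK'iff.1 (fun z hz => h hz.1)⟩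
      · rintro ⟨h1, h2⟩ z hz
        by_cases hze : z = e
        · exact hze ▸ Finset.mem_coe.2 h1
        · exact hK'iff.2 h2 ⟨hz, hze⟩
    have hC₂iff : ∀ C₂ : Set α, C₂ ⊆ M₀.E →
        (C₂ ⊆ (↑A : Set α) ↔ C₂ ⊆ ((A ∩ f : Finset α) : Set α)) := by
      intro C₂ hC₂F
      rw [hAfF]
      exact ⟨fun h => Set.subset_inter h hC₂F, fun h => h.trans Set.inter_subset_left⟩
    rw [indep_iff_no_circuit P _ h𝒜E]
    by_cases hce : e ∈ A ∩ f <;> by_cases hau : A ∩ u = u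
    · -- e ∈ A, A∩u = u : K ⊆ A, dependent; R = (u ≠ u ∧ _) = False
      rw [hRdef]
      simp only [if_pos hce, hau]
      constructor
      · intro h
        exact absurd ((hPcirc' Cn.E).2 (Or.inl rfl))
          (h Cn.E (hKiff.2 ⟨heA.2 hce, hau⟩))
      · rintro ⟨h, _⟩
        exact absurd rfl h
    · -- e ∈ A, A∩u ≠ u : indep iff A∩f indep in M₀
      rw [hRdef]
      simp only [if_pos hce]
      constructor
      · intro h
        refine ⟨hau, ?_⟩
        rw [indep_iff_no_circuit M₀ _ hAfsubF]
        intro C hC hCc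
        exact h C (hC.trans hAfsubA) ((hPcirc' C).2 (Or.inr (Or.inl hCc)))
      · rintro ⟨-, hind⟩ C hC hCc
        rcases (hPcirc' C).1 hCc with rfl | h | ⟨C₂, h2, he2, rfl⟩
        · exact hau (hKiff.1 hC).2
        · exact h.2.1 (hind.subset ((hC₂iff C h.1).1 hC))
        · exact hau (hK'iff.1 ((Set.union_subset_iff.1 hC).1))
    · -- e ∉ A, A∩u = u : indep iff (A∩f) ∪ {e} indep in M₀
      rw [hRdef]
      simp only [if_neg hce, if_pos hau]
      have heA' : e ∉ A := fun h => hce (heA.1 h)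
      have hsubF : ((A ∩ f : Finset α) : Set α) ∪ {e} ⊆ M₀.E :=
        Set.union_subset hAfsubF (by simpa using hε)
      constructor
      · intro h
        rw [indep_iff_no_circuit M₀ _ hsubF]
        intro C hC hCc
        by_cases heC : e ∈ C
        · -- mixed circuit
          refine h ((Cn.E \ {e}) ∪ (C \ {e})) ?_ ((hPcirc' _).2 (Or.inr (Or.inr ⟨C, hCc, heC, rfl⟩)))
          refine Set.union_subset (hK'iff.2 hau) ?_
          intro z hz
          rcases hC hz.1 with hzc | hze
          · exact hAfsubA hzc
          · exact absurd hze hz.2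
        · have hCA : C ⊆ ((A ∩ f : Finset α) : Set α) := by
            intro z hz
            rcases hC hz with hzc | hze
            · exact hzc
            · exact absurd (Set.mem_singleton_iff.1 hze ▸ hz) heC
          exact h C (hCA.trans hAfsubA) ((hPcirc' C).2 (Or.inr (Or.inl hCc)))
      · intro hind C hC hCc
        rcases (hPcirc' C).1 hCc with rfl | h | ⟨C₂, h2, he2, rfl⟩
        · exact heA' (hKiff.1 hC).1
        · refine h.2.1 (hind.subset ?_)
          exact ((hC₂iff C h.1).1 hC).trans Set.subset_union_left
        · refine h2.2.1 (hind.subset ?_)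
          have hC₂A : C₂ \ {e} ⊆ ((A ∩ f : Finset α) : Set α) := by
            refine (hC₂iff _ ?_).1 ((Set.union_subset_iff.1 hC).2)
            exact fun z hz => h2.1 hz.1
          intro z hz
          by_cases hze : z = e
          · exact Or.inr (hze ▸ rfl)
          · exact Or.inl (hC₂A ⟨hz, hze⟩)
    · -- e ∉ A, A∩u ≠ u : indep iff A∩f indep in M₀
      rw [hRdef]
      simp only [if_neg hce, if_neg hau]
      have heA' : e ∉ A := fun h => hce (heA.1 h)
      constructor
      · intro h
        rw [indep_iff_no_circuit M₀ _ hAfsubF]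
        intro C hC hCc
        exact h C (hC.trans hAfsubA) ((hPcirc' C).2 (Or.inr (Or.inl hCc)))
      · intro hind C hC hCc
        rcases (hPcirc' C).1 hCc with rfl | h | ⟨C₂, h2, he2, rfl⟩
        · exact heA' (hKiff.1 hC).1
        · exact h.2.1 (hind.subset ((hC₂iff C h.1).1 hC))
        · exact hau (hK'iff.1 ((Set.union_subset_iff.1 hC).1))
  -- rewrite indCount P as a powerset count
  have hcount : indCount P
      = ((u ∪ f).powerset.filter (fun A : Finset α => P.Indep (↑A : Set α))).card := by
    rw [indCount]
    have hfun : (fun A : Finset α => (↑A : Set α) ⊆ P.E ∧ P.Indep (↑A : Set α))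
        = (fun A : Finset α => (↑A : Set α) ⊆ ((u ∪ f : Finset α) : Set α)
            ∧ P.Indep (↑A : Set α)) := by
      rw [hPE']
    simp_rw [hfun]
    rw [filter_univ_eq_powerset (u ∪ f) (fun A : Finset α => P.Indep (↑A : Set α))]
  rw [hcount, card_filter_union_split u f huv _ R hp]
  -- notation for the pieces
  set iM := (f.powerset.filter (fun c : Finset α => M₀.Indep (↑c : Set α))).card with hiM
  set jset := f.powerset.filter
    (fun c : Finset α => e ∉ c ∧ M₀.Indep ((↑c : Set α) ∪ {e})) with hjset
  set ieset := f.powerset.filter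
    (fun c : Finset α => e ∈ c ∧ M₀.Indep (↑c : Set α)) with hieset
  set j'set := f.powerset.filter
    (fun c : Finset α => e ∉ c ∧ M₀.Indep (↑c : Set α)) with hj'set
  -- iM is indCount M₀
  have hiM_eq : indCount M₀ = iM := by
    rw [indCount]
    have hfun : (fun A : Finset α => (↑A : Set α) ⊆ M₀.E ∧ M₀.Indep (↑A : Set α))
        = (fun A : Finset α => (↑A : Set α) ⊆ ((f : Finset α) : Set α)
            ∧ M₀.Indep (↑A : Set α)) := by
      rw [hf]
    simp_rw [hfun]
    rw [filter_univ_eq_powerset f (fun A : Finset α => M₀.Indep (↑A : Set α))]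
  -- the sum over fibers
  have hucard : u.card = n - 1 := by
    rw [hudef, Finset.card_erase_of_mem he_k]
    congr 1
    rw [← hCncard, Set.ncard_eq_toFinset_card _ hKfin]
  have hsum : ∑ a ∈ u.powerset, (f.powerset.filter (R a)).card
      = (2 ^ (n - 1) - 1) * iM + jset.card := by
    rw [Finset.sum_eq_sum_sdiff_singleton_add (Finset.mem_powerset_self u)]
    have hRu : f.powerset.filter (R u) = jset := by
      apply Finset.filter_congr
      intro c _
      by_cases hec : e ∈ c
      · simp only [hRdef, if_pos hec]
        simp [hec]
      · simp only [hRdef, if_neg hec, if_pos rfl]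
        simp [hec]
    have hdiff : ∑ a ∈ u.powerset \ {u}, (f.powerset.filter (R a)).card
        = (2 ^ (n - 1) - 1) * iM := by
      rw [Finset.sum_congr rfl (fun a ha => ?_), Finset.sum_const, Finset.card_sdiff_of_subset
        (Finset.singleton_subset_iff.2 (Finset.mem_powerset_self u)),
        Finset.card_powerset, Finset.card_singleton, hucard, smul_eq_mul]
      have hane : a ≠ u := by
        rw [Finset.mem_sdiff, Finset.mem_singleton] at ha
        exact ha.2
      congr 1
      apply Finset.filter_congr
      intro c _
      by_cases hec : e ∈ c
      · simp only [hRdef, if_pos hec]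
        simp [hane]
      · simp only [hRdef, if_neg hec, if_neg hane]
    rw [hRu, hdiff]
  rw [hsum]
  -- split iM by membership of e
  have hsplit : ieset.card + j'set.card = iM := by
    have h1 : (f.powerset.filter (fun c : Finset α => M₀.Indep (↑c : Set α))).filter
        (fun c => e ∈ c) = ieset := by
      rw [Finset.filter_filter]
      apply Finset.filter_congr
      intro c _
      exact and_comm
    have h2 : (f.powerset.filter (fun c : Finset α => M₀.Indep (↑c : Set α))).filter
        (fun c => e ∉ c) = j'set := by
      rw [Finset.filter_filter]
      apply Finset.filter_congr
      intro c _
      exact and_comm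
    rw [← h1, ← h2, hiM]
    exact Finset.card_filter_add_card_filter_not _
  -- jset.card ≤ ieset.card
  have hje : jset.card ≤ ieset.card := by
    apply Finset.card_le_card_of_injOn (fun c => insert e c)
    · intro c hc
      dsimp only
      rw [hjset, Finset.mem_coe, Finset.mem_filter, Finset.mem_powerset] at hc
      obtain ⟨hcf, hec, hind⟩ := hc
      rw [hieset, Finset.mem_coe, Finset.mem_filter, Finset.mem_powerset]
      refine ⟨Finset.insert_subset he_f hcf, Finset.mem_insert_self _ _, ?_⟩
      rw [Finset.coe_insert, ← Set.union_singleton]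
      exact hind
    · intro c1 h1 c2 h2 heq
      rw [Finset.coe_filter, Set.mem_setOf_eq] at h1 h2
      have heq' : insert e c1 = insert e c2 := heq
      rw [← Finset.erase_insert h1.2.1, heq', Finset.erase_insert h2.2.1]
  -- jset.card < j'set.card, using a base avoiding e
  have hjj' : jset.card < j'set.card := by
    rw [Matroid.IsColoop'] at hcoloop
    push_neg at hcoloop
    obtain ⟨B, hB, heB⟩ := hcoloop
    have hBind : M₀.Indep B := hB.indep
    have hBF : B ⊆ M₀.E := hBind.subset_ground
    have hBfin : B.Finite := Set.toFinite B
    set Bf := hBfin.toFinset with hBfdef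
    have hBf : (Bf : Set α) = B := hBfin.coe_toFinset
    have hmem : Bf ∈ j'set := by
      rw [hj'set, Finset.mem_filter, Finset.mem_powerset]
      refine ⟨?_, ?_, hBf ▸ hBind⟩
      · intro z hz
        rw [← Finset.mem_coe, hf]
        exact hBF (by rwa [← Finset.mem_coe, hBf] at hz)
      · intro h
        exact heB (by rwa [← Finset.mem_coe, hBf] at h)
    have hnot : Bf ∉ jset := by
      rw [hjset, Finset.mem_filter]
      rintro ⟨-, -, hind⟩
      rw [hBf] at hind
      have : B = B ∪ {e} := hB.eq_of_subset_indep hind Set.subset_union_left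
      exact heB (this ▸ Set.mem_union_right B rfl : e ∈ B)
    have hsub : jset ⊆ j'set := by
      intro c hc
      rw [hjset, Finset.mem_filter] at hc
      rw [hj'set, Finset.mem_filter]
      exact ⟨hc.1, hc.2.1, hc.2.2.subset Set.subset_union_left⟩
    exact Finset.card_lt_card ((Finset.ssubset_iff_of_subset hsub).2 ⟨Bf, hmem, hnot⟩)
  -- final arithmetic
  rw [hiM_eq]
  have h2j : 2 * jset.card < iM := by omega
  have ha1 : 1 ≤ 2 ^ (n - 1) := Nat.one_le_two_pow
  have hab : 2 ^ (n - 1) * 2 = 2 ^ n := by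
    rw [← pow_succ]
    congr 1
    omega
  set a := 2 ^ (n - 1)
  set b := 2 ^ n
  calc ((a - 1) * iM + jset.card) * 2 = (2 * (a - 1)) * iM + 2 * jset.card := by ring
    _ = (b - 2) * iM + 2 * jset.card := by
        have : 2 * (a - 1) = b - 2 := by omega
        rw [this]
    _ < (b - 2) * iM + iM := by omega
    _ = (b - 1) * iM := by
        have hb2 : b - 2 + 1 = b - 1 := by omega
        rw [← hb2, Nat.succ_mul]


/-- If `ε₀` is not a coloop of `M₀`, then `M_n = C_n ⊕ M₀` and
`M'_n = P(C_n, M₀) ⊕ S` (with `S` an isthmus) have different Tutte polynomials. -/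
theorem tutte_ne_of_parallelConnection [Fintype α] (n : ℕ) (hn : 2 ≤ n) (M₀ Cn P : Matroid α)
    (hsimple : M₀.IsSimple) (ε₀ : α) (hε : ε₀ ∈ M₀.E)
    (hCncirc : ∀ C, Cn.IsCircuit' C ↔ C = Cn.E) (hCncard : Cn.E.ncard = n)
    (hmeet : Cn.E ∩ M₀.E = {ε₀})
    (hPE : P.E = Cn.E ∪ M₀.E)
    (hPcirc : ∀ C, P.IsCircuit' C ↔ (Cn.IsCircuit' C ∨ M₀.IsCircuit' C ∨
      ∃ C₁ C₂, Cn.IsCircuit' C₁ ∧ M₀.IsCircuit' C₂ ∧ ε₀ ∈ C₁ ∧ ε₀ ∈ C₂ ∧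
        C = (C₁ \ {ε₀}) ∪ (C₂ \ {ε₀})))
    (hcoloop : ¬ M₀.IsColoop' ε₀) :
    (Cn.sum M₀).tutte ≠ (P.sum (Matroid.freeOn (Set.univ : Set Unit))).tutte := by
  intro hEq
  have heval := congrArg (eval (fun i : Fin 2 => if i = 0 then (2:ℤ) else 1)) hEq
  rw [eval_tutte, eval_tutte] at heval
  have hnat : indCount (Cn.sum M₀) = indCount (P.sum (Matroid.freeOn (Set.univ : Set Unit))) :=
    Nat.cast_injective heval
  rw [indCount_sum, indCount_sum, indCount_freeOn_unit,
    indCount_circuitOn n Cn hCncirc hCncard] at hnat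
  have hlt := indCount_P_lt n hn M₀ Cn P ε₀ hε hCncirc hCncard hmeet hPE hPcirc hcoloop
  omega
end

section
/- Every connected matroid M on at least two elements has nonzero beta invariant; equivalently, it is impossible that T_M(x,y) = x · T_{M/e}(x,y) for a non-coloop element e of M. Concretely: if e is not a coloop, then T_M(1,1) > T_{M/e}(1,1), so T_M(x,y) ≠ x·T_{M/e}(x,y). -/
open MvPolynomial Classical
open scoped Matroid

variable {α β : Type*}

section Aux

variable [Fintype α]

lemma mrank_mem_zero (M : Matroid α) (X : Set α) :
    (0 : ℕ) ∈ {n | ∃ I, M.Indep I ∧ I ⊆ X ∧ I.ncard = n} :=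
  ⟨∅, M.empty_indep, Set.empty_subset X, Set.ncard_empty α⟩

lemma mrank_bdd (M : Matroid α) (X : Set α) :
    BddAbove {n | ∃ I, M.Indep I ∧ I ⊆ X ∧ I.ncard = n} := by
  refine ⟨Fintype.card α, ?_⟩
  rintro n ⟨I, -, -, rfl⟩
  have := Set.ncard_le_ncard (Set.subset_univ I) Set.finite_univ
  simpa [Set.ncard_univ] using this

lemma ncard_le_mrank {M : Matroid α} {I X : Set α} (hI : M.Indep I) (hIX : I ⊆ X) :
    I.ncard ≤ M.mrank X :=
  le_csSup (mrank_bdd M X) ⟨I, hI, hIX, rfl⟩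

lemma mrank_le_ncard (M : Matroid α) (X : Set α) : M.mrank X ≤ X.ncard := by
  refine csSup_le ⟨0, mrank_mem_zero M X⟩ ?_
  rintro n ⟨I, -, hIX, rfl⟩
  exact Set.ncard_le_ncard hIX (Set.toFinite X)

lemma exists_indep_mrank (M : Matroid α) (X : Set α) :
    ∃ I, M.Indep I ∧ I ⊆ X ∧ I.ncard = M.mrank X :=
  Nat.sSup_mem ⟨0, mrank_mem_zero M X⟩ (mrank_bdd M X)

lemma mrank_ground_eq {M : Matroid α} {B : Set α} (hB : M.IsBase B) :
    M.mrank M.E = B.ncard := by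
  refine le_antisymm ?_ (ncard_le_mrank hB.indep hB.subset_ground)
  obtain ⟨I, hI, hIX, hcard⟩ := exists_indep_mrank M M.E
  obtain ⟨B', hB', hIB'⟩ := hI.exists_isBase_superset
  calc M.mrank M.E = I.ncard := hcard.symm
    _ ≤ B'.ncard := Set.ncard_le_ncard hIB' (Set.toFinite B')
    _ = B.ncard := hB'.ncard_eq_ncard_of_isBase hB

lemma indep_iff_mrank {M : Matroid α} (X : Set α) : M.Indep X ↔ M.mrank X = X.ncard := by
  constructor
  · intro h
    exact le_antisymm (mrank_le_ncard M X) (ncard_le_mrank h subset_rfl)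
  · intro h
    obtain ⟨I, hI, hIX, hcard⟩ := exists_indep_mrank M X
    have : I = X := Set.eq_of_subset_of_ncard_le hIX (by omega) (Set.toFinite X)
    rwa [this] at hI

lemma base_iff_cond {M : Matroid α} {A : Finset α} (hA : (A : Set α) ⊆ M.E) :
    M.IsBase ↑A ↔ (M.mrank M.E - M.mrank (A : Set α) = 0 ∧ A.card - M.mrank (A : Set α) = 0) := by
  constructor
  · intro hB
    have h1 : M.mrank (A : Set α) = A.card := by
      rw [(indep_iff_mrank _).1 hB.indep, Set.ncard_coe_finset]
    have h2 : M.mrank M.E = A.card := by rw [mrank_ground_eq hB, Set.ncard_coe_finset]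
    omega
  · rintro ⟨h1, h2⟩
    have hle := mrank_le_ncard M (A : Set α)
    rw [Set.ncard_coe_finset] at hle
    have hind : M.Indep ↑A := (indep_iff_mrank _).2 (by rw [Set.ncard_coe_finset]; omega)
    obtain ⟨B, hB, hAB⟩ := hind.exists_isBase_superset
    have hg := mrank_ground_eq hB
    have hcoe : (A : Set α) = B := by
      refine Set.eq_of_subset_of_ncard_le hAB ?_ (Set.toFinite B)
      rw [Set.ncard_coe_finset]; omega
    rwa [hcoe]

lemma eval_tutte_ones (M : Matroid α) :
    MvPolynomial.eval (fun _ => (1 : ℤ)) M.tutte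
      = ((Finset.univ.filter (fun A : Finset α => M.IsBase ↑A)).card : ℤ) := by
  classical
  unfold Matroid.tutte
  rw [map_sum]
  have hterm : ∀ A ∈ Finset.univ.filter (fun A : Finset α => (A : Set α) ⊆ M.E),
      MvPolynomial.eval (fun _ => (1 : ℤ))
        ((X 0 - 1 : MvPolynomial (Fin 2) ℤ) ^ (M.mrank M.E - M.mrank (A : Set α)) *
          (X 1 - 1) ^ (A.card - M.mrank (A : Set α)))
      = if M.IsBase ↑A then (1 : ℤ) else 0 := by
    intro A hA
    rw [Finset.mem_filter] at hA
    rw [map_mul, map_pow, map_pow, map_sub, map_sub, eval_X, eval_X, map_one, sub_self,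
      zero_pow_eq, zero_pow_eq]
    by_cases hb : M.IsBase ↑A
    · obtain ⟨c1, c2⟩ := (base_iff_cond hA.2).1 hb
      rw [if_pos c1, if_pos c2, if_pos hb]; ring
    · rw [if_neg hb]
      by_cases hc1 : M.mrank M.E - M.mrank (A : Set α) = 0
      · have hc2 : ¬ (A.card - M.mrank (A : Set α) = 0) :=
          fun h => hb ((base_iff_cond hA.2).2 ⟨hc1, h⟩)
        rw [if_pos hc1, if_neg hc2]; ring
      · rw [if_neg hc1]; ring
  refine Eq.trans (Finset.sum_congr rfl hterm) ?_
  rw [Finset.sum_boole, Finset.filter_filter]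
  norm_cast
  apply congrArg
  refine Finset.filter_congr ?_
  intro A _
  exact ⟨fun h => h.2, fun h => ⟨h.subset_ground, h⟩⟩

lemma con_base_iff {M : Matroid α} {e : α} (he : e ∈ M.E) (hne : M.Indep {e})
    (B' : Set α) : (M.con {e}).IsBase B' ↔ e ∉ B' ∧ M.IsBase (insert e B') := by
  have hR : M✶.E \ {e} ⊆ M✶.E := Set.diff_subset
  rw [Matroid.con, Matroid.dual_isBase_iff', Matroid.restrict_ground_eq,
    Matroid.isBase_restrict_iff hR, Matroid.dual_ground]
  constructor
  · rintro ⟨hbasis, hB'R⟩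
    have heB' : e ∉ B' := fun h => (hB'R h).2 rfl
    obtain ⟨B₀, hB₀, heB₀⟩ := hne.exists_isBase_superset
    have heB₀' : e ∈ B₀ := heB₀ rfl
    have hdual : M✶.IsBase (M.E \ B₀) := hB₀.compl_isBase_dual
    have hsub : M.E \ B₀ ⊆ M.E \ {e} :=
      Set.diff_subset_diff_right (Set.singleton_subset_iff.2 heB₀')
    have hJbase : M✶.IsBase ((M.E \ {e}) \ B') := hbasis.isBase_of_isBase_subset hdual hsub
    have hid : (M.E \ {e}) \ B' = M.E \ insert e B' := by
      rw [Set.diff_diff, Set.singleton_union]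
    rw [hid] at hJbase
    have := hJbase.compl_isBase_of_dual
    rw [Set.diff_diff_cancel_left
      (Set.insert_subset he (hB'R.trans Set.diff_subset))] at this
    exact ⟨heB', this⟩
  · rintro ⟨heB', hbase⟩
    have hB'R : B' ⊆ M.E \ {e} := fun x hx =>
      ⟨hbase.subset_ground (Set.mem_insert_of_mem _ hx),
        fun h => heB' (Set.mem_singleton_iff.1 h ▸ hx)⟩
    have hdual : M✶.IsBase (M.E \ insert e B') := hbase.compl_isBase_dual
    have hid : (M.E \ {e}) \ B' = M.E \ insert e B' := by
      rw [Set.diff_diff, Set.singleton_union]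
    refine ⟨?_, hB'R⟩
    rw [hid]
    obtain ⟨J, hJ, hsubJ⟩ := hdual.indep.subset_isBasis_of_subset
      (by rw [← hid]; exact Set.diff_subset) hR
    rwa [hdual.eq_of_subset_indep hJ.indep hsubJ]

end Aux

/-- A connected matroid on at least two elements has nonzero beta invariant: for a
non-coloop element `e`, `T_{M/e}(1,1) < T_M(1,1)` and hence `T_M ≠ x · T_{M/e}`. -/
theorem tutte_ne_x_mul_contract [Fintype α] (M : Matroid α) (hconn : M.IsConnected)
    (hcard : 2 ≤ M.E.ncard) (e : α) (he : e ∈ M.E) (hcoloop : ¬ M.IsColoop' e) :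
    MvPolynomial.eval (fun _ => (1 : ℤ)) (M.con {e}).tutte <
        MvPolynomial.eval (fun _ => (1 : ℤ)) M.tutte ∧
      M.tutte ≠ X 0 * (M.con {e}).tutte := by
  classical
  -- `e` is not a loop
  have hne : M.Indep {e} := by
    obtain ⟨f, hf, hfe⟩ := Set.exists_ne_of_one_lt_ncard (s := M.E) (by omega) e
    rcases hconn.2 e he f hf with h | ⟨C, hC, heC, hfC⟩
    · exact absurd h.symm hfe
    · refine hC.2.2 {e} (HasSubset.Subset.ssubset_of_ne (Set.singleton_subset_iff.2 heC) ?_)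
      intro h
      rw [← h] at hfC
      exact hfe (Set.mem_singleton_iff.1 hfC)
  have hkey := fun B' => con_base_iff (M := M) he hne B'
  set SB := Finset.univ.filter (fun A : Finset α => M.IsBase ↑A) with hSB
  set SN := Finset.univ.filter (fun A : Finset α => (M.con {e}).IsBase ↑A) with hSN
  have hlt : SN.card < SB.card := by
    have himg : SN.image (insert e) ⊆ SB := by
      intro A hA
      simp only [Finset.mem_image] at hA
      obtain ⟨B', hB', rfl⟩ := hA
      rw [hSN, Finset.mem_filter] at hB'
      have h2 := (hkey (B' : Set α)).1 hB'.2
      rw [hSB, Finset.mem_filter]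
      refine ⟨Finset.mem_univ _, ?_⟩
      rw [Finset.coe_insert]
      exact h2.2
    obtain ⟨B₀, hB₀, heB₀⟩ := by
      rw [Matroid.IsColoop'] at hcoloop; push_neg at hcoloop; exact hcoloop
    have hmem : B₀.toFinset ∈ SB := by
      rw [hSB, Finset.mem_filter]
      exact ⟨Finset.mem_univ _, by rwa [Set.coe_toFinset]⟩
    have hnot : B₀.toFinset ∉ SN.image (insert e) := by
      intro h
      simp only [Finset.mem_image] at h
      obtain ⟨A, _, hAe⟩ := h
      apply heB₀
      have hmem' : e ∈ insert e A := Finset.mem_insert_self e A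
      rw [hAe] at hmem'
      rwa [← Set.mem_toFinset]
    have hss : SN.image (insert e) ⊂ SB := ⟨himg, fun h => hnot (h hmem)⟩
    have hinj : Set.InjOn (insert e) (SN : Set (Finset α)) := by
      intro A₁ h₁ A₂ h₂ hins
      rw [Finset.mem_coe, hSN, Finset.mem_filter] at h₁ h₂
      have he₁ : e ∉ A₁ := fun h => ((hkey _).1 h₁.2).1 (by exact_mod_cast h)
      have he₂ : e ∉ A₂ := fun h => ((hkey _).1 h₂.2).1 (by exact_mod_cast h)
      have : (insert e A₁).erase e = (insert e A₂).erase e := by rw [hins]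
      rwa [Finset.erase_insert he₁, Finset.erase_insert he₂] at this
    calc SN.card = (SN.image (insert e)).card := (Finset.card_image_of_injOn hinj).symm
      _ < SB.card := Finset.card_lt_card hss
  have heval : MvPolynomial.eval (fun _ => (1 : ℤ)) (M.con {e}).tutte <
      MvPolynomial.eval (fun _ => (1 : ℤ)) M.tutte := by
    rw [eval_tutte_ones, eval_tutte_ones, ← hSB, ← hSN]
    exact_mod_cast hlt
  refine ⟨heval, ?_⟩
  intro h
  have hcongr := congrArg (MvPolynomial.eval (fun _ => (1 : ℤ))) h
  rw [map_mul, eval_X, one_mul] at hcongr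
  rw [hcongr] at heval
  exact lt_irrefl _ heval
end

section
/- Let A_0, A_1 be central arrangements in ℂ^{r_0}, ℂ^{r_1} both containing the hyperplane x_1 = 0 (after a change of coordinates), with Q(A_0) = x_1 Q̂_0 and Q(A_1) = x_1 Q̂_1, and let P(A_0, A_1) be the central arrangement in ℂ^{r_0+r_1-1} with defining polynomial Q_0(x_1,...,x_{r_0}) · Q̂_1(x_1, y_2,...,y_{r_1}). Let S be the arrangement {0} in ℂ^1. Then the complements C(A_0 ⊕ A_1) and C(S ⊕ P(A_0,A_1)) are homeomorphic; indeed both are homeomorphic to ℂ* × ℂ* × C(dA_0) × C(dA_1). -/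
private lemma pc_smul_cons {r : ℕ} (c a : ℂ) (x : Fin r → ℂ) :
    (Fin.cons (c * a) (c • x) : Fin (r + 1) → ℂ) = c • (Fin.cons a x : Fin (r + 1) → ℂ) := by
  funext i
  refine Fin.cases ?_ ?_ i <;> simp

private lemma pc_lin_cons_smul {r : ℕ} (f : (Fin (r + 1) → ℂ) →ₗ[ℂ] ℂ) (c a : ℂ)
    (x : Fin r → ℂ) : f (Fin.cons (c * a) (c • x)) = c * f (Fin.cons a x) := by
  rw [pc_smul_cons, map_smul, smul_eq_mul]

private lemma pc_lin_cons_smul' {r : ℕ} (f : (Fin (r + 1) → ℂ) →ₗ[ℂ] ℂ) (c : ℂ)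
    (x : Fin r → ℂ) : f (Fin.cons c (c • x)) = c * f (Fin.cons 1 x) := by
  simpa using pc_lin_cons_smul f c 1 x

private lemma pc_cont_cons {X : Type*} [TopologicalSpace X] {r : ℕ}
    {a : X → ℂ} {x : X → Fin r → ℂ} (ha : Continuous a) (hx : Continuous x) :
    Continuous fun p => (Fin.cons (a p) (x p) : Fin (r + 1) → ℂ) := by
  refine continuous_pi fun i => ?_
  refine Fin.cases ?_ ?_ i
  · simpa using ha
  · intro j
    simpa [Function.comp_def] using (continuous_apply j).comp hx

/-- Coning homeomorphism: the complement of a central arrangement containing `proj 0`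
is homeomorphic to `ℂ* × C(dA)`. -/
private noncomputable def coneHomeo (r : ℕ) (A : Finset ((Fin (r + 1) → ℂ) →ₗ[ℂ] ℂ))
    (hπ : (LinearMap.proj 0 : (Fin (r + 1) → ℂ) →ₗ[ℂ] ℂ) ∈ A) :
    {p : Fin (r + 1) → ℂ | ∀ f ∈ A, f p ≠ 0} ≃ₜ
      ({z : ℂ | z ≠ 0} ×
        {x : Fin r → ℂ | ∀ f ∈ A,
          f ≠ (LinearMap.proj 0 : (Fin (r + 1) → ℂ) →ₗ[ℂ] ℂ) → f (Fin.cons 1 x) ≠ 0}) where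
  toFun p := by
    refine ⟨⟨p.1 0, p.2 _ hπ⟩, ⟨(p.1 0)⁻¹ • Fin.tail p.1, ?_⟩⟩
    intro f hf _
    have h0 : p.1 0 ≠ 0 := p.2 _ hπ
    have : (Fin.cons 1 ((p.1 0)⁻¹ • Fin.tail p.1) : Fin (r + 1) → ℂ) = (p.1 0)⁻¹ • p.1 := by
      rw [show (1 : ℂ) = (p.1 0)⁻¹ * p.1 0 by field_simp, pc_smul_cons, Fin.cons_self_tail]
    rw [this, map_smul, smul_eq_mul]
    exact mul_ne_zero (inv_ne_zero h0) (p.2 _ hf)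
  invFun q := by
    refine ⟨Fin.cons q.1.1 (q.1.1 • q.2.1), ?_⟩
    intro f hf
    rcases eq_or_ne f (LinearMap.proj 0) with rfl | hne
    · simp only [LinearMap.proj_apply, Fin.cons_zero]
      exact q.1.2
    · rw [pc_lin_cons_smul']
      exact mul_ne_zero q.1.2 (q.2.2 f hf hne)
  left_inv p := by
    apply Subtype.ext
    show Fin.cons (p.1 0) (p.1 0 • ((p.1 0)⁻¹ • Fin.tail p.1)) = p.1
    have h0 : p.1 0 ≠ 0 := p.2 _ hπ
    rw [smul_smul, mul_inv_cancel₀ h0, one_smul, Fin.cons_self_tail]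
  right_inv q := by
    have h0 : (q.1.1 : ℂ) ≠ 0 := q.1.2
    refine Prod.ext (Subtype.ext ?_) (Subtype.ext ?_)
    · simp
    · simp [Fin.tail_cons, smul_smul, inv_mul_cancel₀ h0]
  continuous_toFun := by
    refine Continuous.prodMk (Continuous.subtype_mk ?_ _) (Continuous.subtype_mk ?_ _)
    · exact (continuous_apply 0).comp continuous_subtype_val
    · refine continuous_pi fun j => ?_
      refine Continuous.mul (Continuous.inv₀ ?_ fun p => p.2 _ hπ) ?_
      · exact (continuous_apply 0).comp continuous_subtype_val
      · exact (continuous_apply j.succ).comp continuous_subtype_val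
  continuous_invFun := by
    refine Continuous.subtype_mk (pc_cont_cons ?_ ?_) _
    · exact continuous_subtype_val.comp continuous_fst
    · refine continuous_pi fun j => ?_
      exact (continuous_subtype_val.comp continuous_fst).mul
        ((continuous_apply j).comp (continuous_subtype_val.comp continuous_snd))

/-- Decoupling homeomorphism for the parallel-connection part. -/
private noncomputable def decoupleHomeo (r₀ r₁ : ℕ) (A₀ : Finset ((Fin (r₀ + 1) → ℂ) →ₗ[ℂ] ℂ))
    (A₁ : Finset ((Fin (r₁ + 1) → ℂ) →ₗ[ℂ] ℂ))
    (hπ₀ : (LinearMap.proj 0 : (Fin (r₀ + 1) → ℂ) →ₗ[ℂ] ℂ) ∈ A₀) :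
    {w : (Fin (r₀ + 1) → ℂ) × (Fin r₁ → ℂ) |
        (∀ f ∈ A₀, f w.1 ≠ 0) ∧
          ∀ g ∈ A₁, g ≠ (LinearMap.proj 0 : (Fin (r₁ + 1) → ℂ) →ₗ[ℂ] ℂ) →
            g (Fin.cons (w.1 0) w.2) ≠ 0} ≃ₜ
      ({p : Fin (r₀ + 1) → ℂ | ∀ f ∈ A₀, f p ≠ 0} ×
        {y : Fin r₁ → ℂ | ∀ g ∈ A₁,
          g ≠ (LinearMap.proj 0 : (Fin (r₁ + 1) → ℂ) →ₗ[ℂ] ℂ) → g (Fin.cons 1 y) ≠ 0}) where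
  toFun w := by
    refine ⟨⟨w.1.1, w.2.1⟩, ⟨(w.1.1 0)⁻¹ • w.1.2, ?_⟩⟩
    intro g hg hne
    have h0 : w.1.1 0 ≠ 0 := w.2.1 _ hπ₀
    rw [show (1 : ℂ) = (w.1.1 0)⁻¹ * w.1.1 0 by field_simp, pc_lin_cons_smul]
    exact mul_ne_zero (inv_ne_zero h0) (w.2.2 g hg hne)
  invFun uv := by
    refine ⟨(uv.1.1, uv.1.1 0 • uv.2.1), ⟨uv.1.2, ?_⟩⟩
    intro g hg hne
    have h0 : uv.1.1 0 ≠ 0 := uv.1.2 _ hπ₀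
    show g (Fin.cons (uv.1.1 0) (uv.1.1 0 • uv.2.1)) ≠ 0
    rw [pc_lin_cons_smul']
    exact mul_ne_zero h0 (uv.2.2 g hg hne)
  left_inv w := by
    have h0 : w.1.1 0 ≠ 0 := w.2.1 _ hπ₀
    apply Subtype.ext
    refine Prod.ext rfl ?_
    show w.1.1 0 • ((w.1.1 0)⁻¹ • w.1.2) = w.1.2
    rw [smul_smul, mul_inv_cancel₀ h0, one_smul]
  right_inv uv := by
    have h0 : uv.1.1 0 ≠ 0 := uv.1.2 _ hπ₀
    refine Prod.ext (Subtype.ext rfl) (Subtype.ext ?_)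
    show (uv.1.1 0)⁻¹ • (uv.1.1 0 • uv.2.1) = uv.2.1
    rw [smul_smul, inv_mul_cancel₀ h0, one_smul]
  continuous_toFun := by
    refine Continuous.prodMk (Continuous.subtype_mk ?_ _) (Continuous.subtype_mk ?_ _)
    · exact continuous_fst.comp continuous_subtype_val
    · refine continuous_pi fun j => ?_
      refine Continuous.mul (Continuous.inv₀ ?_ fun w => w.2.1 _ hπ₀) ?_
      · exact (continuous_apply 0).comp (continuous_fst.comp continuous_subtype_val)
      · exact (continuous_apply j).comp (continuous_snd.comp continuous_subtype_val)
  continuous_invFun := by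
    refine Continuous.subtype_mk (Continuous.prodMk ?_ ?_) _
    · exact continuous_subtype_val.comp continuous_fst
    · refine continuous_pi fun j => ?_
      exact ((continuous_apply 0).comp (continuous_subtype_val.comp continuous_fst)).mul
        ((continuous_apply j).comp (continuous_subtype_val.comp continuous_snd))

/-- Let `A₀`, `A₁` be central arrangements (finite sets of nonzero linear forms) on
`ℂ^(r₀+1)` and `ℂ^(r₁+1)` both containing the coordinate hyperplane `x₁ = 0` (the form
`proj 0`). Then the complement of `A₀ ⊕ A₁` is homeomorphic to the complement of
`S ⊕ P(A₀, A₁)`, where `P(A₀, A₁)` is the parallel connection (defined by the forms of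
`A₀` in the variables `x` together with the forms of `A₁ \ {proj 0}` in the variables
`(x 0, y)`), and `S` is the arrangement `{0}` in `ℂ`; moreover both are homeomorphic to
`ℂ* × ℂ* × C(dA₀) × C(dA₁)`. -/
theorem parallel_connection_homeomorph (r₀ r₁ : ℕ)
    (A₀ : Finset ((Fin (r₀ + 1) → ℂ) →ₗ[ℂ] ℂ)) (A₁ : Finset ((Fin (r₁ + 1) → ℂ) →ₗ[ℂ] ℂ))
    (hA₀ : ∀ f ∈ A₀, f ≠ 0) (hA₁ : ∀ g ∈ A₁, g ≠ 0)
    (hπ₀ : (LinearMap.proj 0 : (Fin (r₀ + 1) → ℂ) →ₗ[ℂ] ℂ) ∈ A₀)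
    (hπ₁ : (LinearMap.proj 0 : (Fin (r₁ + 1) → ℂ) →ₗ[ℂ] ℂ) ∈ A₁) :
    Nonempty
      ({p : (Fin (r₀ + 1) → ℂ) × (Fin (r₁ + 1) → ℂ) |
          (∀ f ∈ A₀, f p.1 ≠ 0) ∧ ∀ g ∈ A₁, g p.2 ≠ 0} ≃ₜ
        {q : ℂ × ((Fin (r₀ + 1) → ℂ) × (Fin r₁ → ℂ)) |
          q.1 ≠ 0 ∧ (∀ f ∈ A₀, f q.2.1 ≠ 0) ∧
            ∀ g ∈ A₁, g ≠ (LinearMap.proj 0 : (Fin (r₁ + 1) → ℂ) →ₗ[ℂ] ℂ) →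
              g (Fin.cons (q.2.1 0) q.2.2) ≠ 0}) ∧
    Nonempty
      ({p : (Fin (r₀ + 1) → ℂ) × (Fin (r₁ + 1) → ℂ) |
          (∀ f ∈ A₀, f p.1 ≠ 0) ∧ ∀ g ∈ A₁, g p.2 ≠ 0} ≃ₜ
        ({z : ℂ | z ≠ 0} × {z : ℂ | z ≠ 0} ×
          {x : Fin r₀ → ℂ | ∀ f ∈ A₀,
            f ≠ (LinearMap.proj 0 : (Fin (r₀ + 1) → ℂ) →ₗ[ℂ] ℂ) → f (Fin.cons 1 x) ≠ 0} ×
          {y : Fin r₁ → ℂ | ∀ g ∈ A₁,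
            g ≠ (LinearMap.proj 0 : (Fin (r₁ + 1) → ℂ) →ₗ[ℂ] ℂ) → g (Fin.cons 1 y) ≠ 0})) := by
  -- the main homeomorphism: C(A₀ ⊕ A₁) ≃ₜ ℂ* × ℂ* × C(dA₀) × C(dA₁)
  let e₂ :
      {p : (Fin (r₀ + 1) → ℂ) × (Fin (r₁ + 1) → ℂ) |
          (∀ f ∈ A₀, f p.1 ≠ 0) ∧ ∀ g ∈ A₁, g p.2 ≠ 0} ≃ₜ
        ({z : ℂ | z ≠ 0} × {z : ℂ | z ≠ 0} ×
          {x : Fin r₀ → ℂ | ∀ f ∈ A₀,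
            f ≠ (LinearMap.proj 0 : (Fin (r₀ + 1) → ℂ) →ₗ[ℂ] ℂ) → f (Fin.cons 1 x) ≠ 0} ×
          {y : Fin r₁ → ℂ | ∀ g ∈ A₁,
            g ≠ (LinearMap.proj 0 : (Fin (r₁ + 1) → ℂ) →ₗ[ℂ] ℂ) → g (Fin.cons 1 y) ≠ 0}) :=
    (Homeomorph.setCongr (by ext p; simp [Set.mem_prod])).trans <|
      (Homeomorph.Set.prod _ _).trans <|
        ((coneHomeo r₀ A₀ hπ₀).prodCongr (coneHomeo r₁ A₁ hπ₁)).trans <|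
          (Homeomorph.prodProdProdComm _ _ _ _).trans (Homeomorph.prodAssoc _ _ _)
  -- homeomorphism for the parallel-connection complement
  let t₁ :
      {q : ℂ × ((Fin (r₀ + 1) → ℂ) × (Fin r₁ → ℂ)) |
          q.1 ≠ 0 ∧ (∀ f ∈ A₀, f q.2.1 ≠ 0) ∧
            ∀ g ∈ A₁, g ≠ (LinearMap.proj 0 : (Fin (r₁ + 1) → ℂ) →ₗ[ℂ] ℂ) →
              g (Fin.cons (q.2.1 0) q.2.2) ≠ 0} ≃ₜ
        ({z : ℂ | z ≠ 0} × {z : ℂ | z ≠ 0} ×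
          {x : Fin r₀ → ℂ | ∀ f ∈ A₀,
            f ≠ (LinearMap.proj 0 : (Fin (r₀ + 1) → ℂ) →ₗ[ℂ] ℂ) → f (Fin.cons 1 x) ≠ 0} ×
          {y : Fin r₁ → ℂ | ∀ g ∈ A₁,
            g ≠ (LinearMap.proj 0 : (Fin (r₁ + 1) → ℂ) →ₗ[ℂ] ℂ) → g (Fin.cons 1 y) ≠ 0}) :=
    (Homeomorph.setCongr (by ext q; simp [Set.mem_prod, and_assoc])).trans <|
      (Homeomorph.Set.prod _ _).trans <|
        ((Homeomorph.refl _).prodCongr <|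
          ((decoupleHomeo r₀ r₁ A₀ A₁ hπ₀).trans <|
            ((coneHomeo r₀ A₀ hπ₀).prodCongr (Homeomorph.refl _)).trans
              (Homeomorph.prodAssoc _ _ _)))
  exact ⟨⟨e₂.trans t₁.symm⟩, ⟨e₂⟩⟩
end

section
/- For n ≥ 3, the image under φ̂ of ∂(e_1⋯e_n) equals ∂(ē_1⋯ē_n), where φ̂ is the exterior-algebra map sending e_i ↦ ē_i − ē_n + e_p for 1 ≤ i ≤ n−1 and e_n ↦ e_p. -/
open ExteriorAlgebra

section Aux

set_option linter.unusedSectionVars false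

variable {A : Type*} [Ring A]

private lemma range_map_succ (x : ℕ → A) (n : ℕ) :
    (List.range (n + 1)).map x = (List.range n).map x ++ [x n] := by
  simp [List.range_succ]

private lemma erase_last (x : ℕ → A) (n : ℕ) :
    (((List.range (n + 1)).map x).eraseIdx n) = (List.range n).map x := by
  rw [range_map_succ, List.eraseIdx_append_of_length_le (by simp)]
  simp

private lemma erase_lt (x : ℕ → A) (n i : ℕ) (hi : i < n) :
    (((List.range (n + 1)).map x).eraseIdx i)
      = ((List.range n).map x).eraseIdx i ++ [x n] := by
  rw [range_map_succ, List.eraseIdx_append_of_lt_length (by simpa using hi)]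

/-- the boundary sum -/
private def D (x : ℕ → A) (n : ℕ) : A :=
  ∑ i ∈ Finset.range n, (-1 : A) ^ i * (((List.range n).map x).eraseIdx i).prod

private lemma D_mul (x : ℕ → A) (hsq : ∀ i, x i * x i = 0) (n : ℕ) :
    D x (n + 1) * x n = (-1 : A) ^ n * ((List.range (n + 1)).map x).prod := by
  rw [D, Finset.sum_range_succ, add_mul, Finset.sum_mul]
  have h0 : ∀ i ∈ Finset.range n,
      (-1 : A) ^ i * (((List.range (n + 1)).map x).eraseIdx i).prod * x n = 0 := by
    intro i hi
    rw [erase_lt x n i (Finset.mem_range.mp hi), List.prod_append, List.prod_singleton,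
      mul_assoc, mul_assoc, hsq, mul_zero, mul_zero]
  rw [Finset.sum_congr rfl h0, Finset.sum_const, smul_zero, zero_add,
    erase_last, mul_assoc, ← List.prod_singleton (x := x n), ← List.prod_append,
    ← range_map_succ]

private lemma D_eq (x : ℕ → A) (hsq : ∀ i, x i * x i = 0) (n : ℕ) :
    D x (n + 1)
      = (-1 : A) ^ n * ((List.range n).map (fun i => x i - x (i + 1))).prod := by
  induction n with
  | zero => simp [D, List.range_succ]
  | succ n ih =>
    have hD : D x (n + 2) = D x (n + 1) * x (n + 1)
        + (-1 : A) ^ (n + 1) * ((List.range (n + 1)).map x).prod := by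
      rw [D, Finset.sum_range_succ, erase_last]
      congr 1
      rw [D, Finset.sum_mul]
      refine Finset.sum_congr rfl fun i hi => ?_
      rw [erase_lt x (n + 1) i (Finset.mem_range.mp hi), List.prod_append,
        List.prod_singleton]
      exact (mul_assoc _ _ _).symm
    calc D x (n + 2)
        = D x (n + 1) * x (n + 1)
            + (-1 : A) ^ (n + 1) * ((List.range (n + 1)).map x).prod := hD
      _ = D x (n + 1) * x (n + 1)
            - (-1 : A) ^ n * ((List.range (n + 1)).map x).prod := by
          rw [pow_succ, mul_neg_one, neg_mul, ← sub_eq_add_neg]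
      _ = D x (n + 1) * x (n + 1) - D x (n + 1) * x n := by
          rw [D_mul x hsq n]
      _ = -(D x (n + 1) * (x n - x (n + 1))) := by rw [mul_sub, neg_sub]
      _ = -(((-1 : A) ^ n * ((List.range n).map (fun i => x i - x (i + 1))).prod)
            * (x n - x (n + 1))) := by rw [ih]
      _ = (-1 : A) ^ (n + 1) * (((List.range n).map (fun i => x i - x (i + 1))).prod
            * (x n - x (n + 1))) := by
          rw [pow_succ, mul_neg_one, neg_mul, mul_assoc]
      _ = (-1 : A) ^ (n + 1)
            * ((List.range (n + 1)).map (fun i => x i - x (i + 1))).prod := by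
          rw [range_map_succ (fun i => x i - x (i + 1)) n, List.prod_append,
            List.prod_singleton]
end Aux

/-- For `n ≥ 3`, if an algebra homomorphism `φ` of exterior algebras sends
`e i ↦ ē i - ē n + e p` for `1 ≤ i ≤ n - 1` and `e n ↦ e p`, then
`φ(∂(e 1 ⋯ e n)) = ∂(ē 1 ⋯ ē n)`. -/
theorem phi_boundary (R M M' : Type*) [CommRing R] [AddCommGroup M] [Module R M]
    [AddCommGroup M'] [Module R M'] (n : ℕ) (hn : 3 ≤ n)
    (φ : ExteriorAlgebra R M →ₐ[R] ExteriorAlgebra R M')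
    (v : Fin n → M) (w : Fin n → M') (p : M')
    (hφ : ∀ i : Fin n, (i : ℕ) < n - 1 →
      φ (ExteriorAlgebra.ι R (v i)) =
        ExteriorAlgebra.ι R (w i) - ExteriorAlgebra.ι R (w ⟨n - 1, by omega⟩) +
          ExteriorAlgebra.ι R p)
    (hφn : φ (ExteriorAlgebra.ι R (v ⟨n - 1, by omega⟩)) = ExteriorAlgebra.ι R p) :
    φ (∑ i : Fin n, ((-1 : ExteriorAlgebra R M) ^ (i : ℕ)) *
        ((List.ofFn fun j : Fin n => ExteriorAlgebra.ι R (v j)).eraseIdx i).prod) =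
      ∑ i : Fin n, ((-1 : ExteriorAlgebra R M') ^ (i : ℕ)) *
        ((List.ofFn fun j : Fin n => ExteriorAlgebra.ι R (w j)).eraseIdx i).prod := by
  set fv : ℕ → ExteriorAlgebra R M :=
    fun i => if h : i < n then ExteriorAlgebra.ι R (v ⟨i, h⟩) else 0 with hfv
  set fw : ℕ → ExteriorAlgebra R M' :=
    fun i => if h : i < n then ExteriorAlgebra.ι R (w ⟨i, h⟩) else 0 with hfw
  have hsqv : ∀ i, fv i * fv i = 0 := by
    intro i; by_cases h : i < n <;> simp [hfv, h, ExteriorAlgebra.ι_sq_zero]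
  have hsqw : ∀ i, fw i * fw i = 0 := by
    intro i; by_cases h : i < n <;> simp [hfw, h, ExteriorAlgebra.ι_sq_zero]
  have hofv : (List.ofFn fun j : Fin n => ExteriorAlgebra.ι R (v j))
      = (List.range n).map fv := by
    refine List.ext_getElem (by simp) fun k h1 h2 => ?_
    have hk : k < n := by simpa using h2
    simp [hfv, hk]
  have hofw : (List.ofFn fun j : Fin n => ExteriorAlgebra.ι R (w j))
      = (List.range n).map fw := by
    refine List.ext_getElem (by simp) fun k h1 h2 => ?_
    have hk : k < n := by simpa using h2
    simp [hfw, hk]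
  have hsumv : (∑ i : Fin n, ((-1 : ExteriorAlgebra R M) ^ (i : ℕ)) *
      ((List.ofFn fun j : Fin n => ExteriorAlgebra.ι R (v j)).eraseIdx i).prod)
      = D fv n := by
    rw [hofv, D, ← Fin.sum_univ_eq_sum_range]
  have hsumw : (∑ i : Fin n, ((-1 : ExteriorAlgebra R M') ^ (i : ℕ)) *
      ((List.ofFn fun j : Fin n => ExteriorAlgebra.ι R (w j)).eraseIdx i).prod)
      = D fw n := by
    rw [hofw, D, ← Fin.sum_univ_eq_sum_range]
  obtain ⟨m, rfl⟩ : ∃ m, n = m + 1 := ⟨n - 1, by omega⟩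
  rw [hsumv, hsumw, D_eq fv hsqv, D_eq fw hsqw, map_mul, map_pow, map_neg, map_one,
    map_list_prod, List.map_map]
  congr 1
  refine congrArg List.prod (List.map_congr_left fun i hi => ?_)
  have hi' : i < m := List.mem_range.mp hi
  have hiv : fv i = ExteriorAlgebra.ι R (v ⟨i, by omega⟩) := by
    simp only [hfv]; rw [dif_pos (show i < m + 1 by omega)]
  have hiw : fw i = ExteriorAlgebra.ι R (w ⟨i, by omega⟩) := by
    simp only [hfw]; rw [dif_pos (show i < m + 1 by omega)]
  have hiv' : fv (i + 1) = ExteriorAlgebra.ι R (v ⟨i + 1, by omega⟩) := by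
    simp only [hfv]; rw [dif_pos (show i + 1 < m + 1 by omega)]
  have hiw' : fw (i + 1) = ExteriorAlgebra.ι R (w ⟨i + 1, by omega⟩) := by
    simp only [hfw]; rw [dif_pos (show i + 1 < m + 1 by omega)]
  simp only [Function.comp_apply, map_sub, hiv, hiw, hiv', hiw']
  have h1 : φ (ExteriorAlgebra.ι R (v ⟨i, by omega⟩)) =
      ExteriorAlgebra.ι R (w ⟨i, by omega⟩) -
        ExteriorAlgebra.ι R (w ⟨m + 1 - 1, by omega⟩) +
        ExteriorAlgebra.ι R p := hφ ⟨i, by omega⟩ (by simpa using hi')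
  rcases eq_or_lt_of_le (Nat.succ_le_of_lt hi') with heq | hlt
  · -- i + 1 = m
    have h2 : φ (ExteriorAlgebra.ι R (v ⟨i + 1, by omega⟩)) = ExteriorAlgebra.ι R p := by
      have he : (⟨i + 1, by omega⟩ : Fin (m + 1)) = ⟨m + 1 - 1, by omega⟩ :=
        Fin.mk_eq_mk.mpr (by omega)
      rw [he]; exact hφn
    rw [h1, h2]
    have hw2 : (⟨m + 1 - 1, by omega⟩ : Fin (m + 1)) = ⟨i + 1, by omega⟩ :=
      Fin.mk_eq_mk.mpr (by omega)
    rw [hw2]; abel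
  · -- i + 1 < m
    have h2 : φ (ExteriorAlgebra.ι R (v ⟨i + 1, by omega⟩)) =
        ExteriorAlgebra.ι R (w ⟨i + 1, by omega⟩) -
          ExteriorAlgebra.ι R (w ⟨m + 1 - 1, by omega⟩) + ExteriorAlgebra.ι R p :=
      hφ ⟨i + 1, by omega⟩ (by simpa using hlt)
    rw [h1, h2]; abel
end
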